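/- arXiv:2012.08784 — 3 statements merged into one kernel-verified Lean document; each statement's English description precedes it below -/
import Mathlib

section
/- Let Z ∈ ℂ^{n1×n2×n3} admit a skinny transformed tensor SVD Z = U ⋄ S ⋄ Vᴴ, let T be the subspace determined by U and V, and let Ω ⊆ [n1]×[n2]×[n3]. Suppose (i) there exists Y ∈ ℂ^{n1×n2×n3} with P_Ω(Y) = Y, ‖P_T(Y) − U ⋄ Vᴴ‖_F ≤ 1/(4 n_(1) n_3), and ‖P_{T⊥}(Y)‖ ≤ 1/2 (tensor spectral norm), and (ii) every nonzero W ∈ ℂ^{n1×n2×n3} with P_Ω(W) = 0 satisfies (1/2)‖P_{T⊥}(W)‖_TTNN > (1/(4 n_(1) n_3))‖P_T(W)‖_F. Then Z is the unique minimizer of ‖X‖_TTNN over all X ∈ ℂ^{n1×n2×n3} with P_Ω(X) = P_Ω(Z). -/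
open scoped BigOperators ComplexConjugate
open MeasureTheory Matrix

noncomputable section

/-- A third-order complex tensor. -/
abbrev Tensor (n1 n2 n3 : ℕ) : Type := Fin n1 → Fin n2 → Fin n3 → ℂ

namespace Tensor

variable {n1 n2 n3 n4 r : ℕ}

/-- The `t`-th frontal slice of the transformed tensor `Φ[A]`. -/
def slice (Φ : Matrix (Fin n3) (Fin n3) ℂ) (A : Tensor n1 n2 n3) (t : Fin n3) :
    Matrix (Fin n1) (Fin n2) ℂ :=
  Matrix.of fun i j => ∑ k, Φ t k * A i j k

/-- Reconstruct a tensor from its transformed frontal slices (inverse transform `Φᴴ[·]`). -/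
def unslice (Φ : Matrix (Fin n3) (Fin n3) ℂ)
    (M : Fin n3 → Matrix (Fin n1) (Fin n2) ℂ) : Tensor n1 n2 n3 :=
  fun i j k => ∑ t, (starRingEnd ℂ) (Φ t k) * M t i j

/-- The Φ-product `A ⋄ B`. -/
def tprod (Φ : Matrix (Fin n3) (Fin n3) ℂ) (A : Tensor n1 n2 n3) (B : Tensor n2 n4 n3) :
    Tensor n1 n4 n3 :=
  unslice Φ fun t => slice Φ A t * slice Φ B t

/-- The conjugate transpose `Aᴴ` with respect to `Φ`. -/
def tconj (Φ : Matrix (Fin n3) (Fin n3) ℂ) (A : Tensor n1 n2 n3) : Tensor n2 n1 n3 :=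
  unslice Φ fun t => (slice Φ A t)ᴴ

/-- Frobenius norm of a tensor. -/
def frob (A : Tensor n1 n2 n3) : ℝ :=
  Real.sqrt (∑ i, ∑ j, ∑ k, Complex.normSq (A i j k))

/-- Entrywise inner product `⟨A, B⟩ = Σ conj(A) B`. -/
def tinner (A B : Tensor n1 n2 n3) : ℂ :=
  ∑ i, ∑ j, ∑ k, (starRingEnd ℂ) (A i j k) * B i j k

/-- `‖A‖_∞`, the max modulus of the entries. -/
def inftyNorm (A : Tensor n1 n2 n3) : ℝ :=
  ⨆ i, ⨆ j, ⨆ k, ‖A i j k‖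

/-- `‖A‖_{∞,2}`. -/
def infty2Norm (A : Tensor n1 n2 n3) : ℝ :=
  max (⨆ i : Fin n1, Real.sqrt (∑ b, ∑ k, Complex.normSq (A i b k)))
      (⨆ j : Fin n2, Real.sqrt (∑ a, ∑ k, Complex.normSq (A a j k)))

/-- The weighted norm `‖A‖_{∞,w}` for a weight vector `w`. -/
def inftyWNorm (w : Fin n3 → ℝ) (A : Tensor n1 n2 n3) : ℝ :=
  max (⨆ i : Fin n1, Real.sqrt (∑ b, ∑ k, (w k) ^ 2 * Complex.normSq (A i b k)))
      (⨆ j : Fin n2, Real.sqrt (∑ a, ∑ k, (w k) ^ 2 * Complex.normSq (A a j k)))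

/-- Spectral norm of a complex matrix (ℓ²→ℓ² operator norm). -/
def specNormM {m n : ℕ} (M : Matrix (Fin m) (Fin n) ℂ) : ℝ :=
  ‖LinearMap.toContinuousLinearMap (Matrix.toEuclideanLin M)‖

/-- Nuclear norm of a complex matrix: the sum of its singular values. -/
def nuclearNormM {m n : ℕ} (M : Matrix (Fin m) (Fin n) ℂ) : ℝ :=
  ∑ i, Real.sqrt ((Matrix.isHermitian_conjTranspose_mul_self M).eigenvalues i)

/-- Tensor spectral norm: max of spectral norms of transformed frontal slices. -/
def specNorm (Φ : Matrix (Fin n3) (Fin n3) ℂ) (A : Tensor n1 n2 n3) : ℝ :=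
  ⨆ t, specNormM (slice Φ A t)

/-- Transformed tensor nuclear norm. -/
def ttnn (Φ : Matrix (Fin n3) (Fin n3) ℂ) (A : Tensor n1 n2 n3) : ℝ :=
  ∑ t, nuclearNormM (slice Φ A t)

/-- The sampling projection `P_Ω`. -/
def projOmega (Ω : Set (Fin n1 × Fin n2 × Fin n3)) (A : Tensor n1 n2 n3) :
    Tensor n1 n2 n3 :=
  fun i j k => Ω.indicator (fun p => A p.1 p.2.1 p.2.2) (i, j, k)

/-- The column-basis tensor `e_ik ∈ ℂ^{n×1×n3}`. -/
def colBasis {n n3 : ℕ} (i : Fin n) (k : Fin n3) : Tensor n 1 n3 :=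
  fun a _ c => if a = i ∧ c = k then 1 else 0

/-- The unit tensor `E_ijk`. -/
def unitTensor (i : Fin n1) (j : Fin n2) (k : Fin n3) : Tensor n1 n2 n3 :=
  fun a b c => if a = i ∧ b = j ∧ c = k then 1 else 0

/-- The orthogonal projection `P_T` onto the subspace `T` determined by `U, V`. -/
def projT (Φ : Matrix (Fin n3) (Fin n3) ℂ) (U : Tensor n1 r n3) (V : Tensor n2 r n3)
    (X : Tensor n1 n2 n3) : Tensor n1 n2 n3 :=
  tprod Φ (tprod Φ U (tconj Φ U)) X + tprod Φ X (tprod Φ V (tconj Φ V))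
    - tprod Φ (tprod Φ (tprod Φ U (tconj Φ U)) X) (tprod Φ V (tconj Φ V))

/-- `P_{T⊥}(X) = X - P_T(X)`. -/
def projTperp (Φ : Matrix (Fin n3) (Fin n3) ℂ) (U : Tensor n1 r n3) (V : Tensor n2 r n3)
    (X : Tensor n1 n2 n3) : Tensor n1 n2 n3 :=
  X - projT Φ U V X

/-- Operator norm of a map on tensors, w.r.t. the Frobenius norm. -/
def opNorm (L : Tensor n1 n2 n3 → Tensor n1 n2 n3) : ℝ :=
  sSup ((fun X => frob (L X)) '' {X | frob X ≤ 1})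

/-- A skinny transformed tensor SVD `Z = U ⋄ S ⋄ Vᴴ`. -/
structure SkinnySVD (Φ : Matrix (Fin n3) (Fin n3) ℂ) (Z : Tensor n1 n2 n3) (r : ℕ)
    (U : Tensor n1 r n3) (S : Tensor r r n3) (V : Tensor n2 r n3) : Prop where
  factor : Z = tprod Φ (tprod Φ U S) (tconj Φ V)
  U_orth : ∀ t, (slice Φ U t)ᴴ * slice Φ U t = 1
  V_orth : ∀ t, (slice Φ V t)ᴴ * slice Φ V t = 1
  S_offdiag : ∀ t i j, i ≠ j → slice Φ S t i j = 0
  S_diag_real_nonneg : ∀ t i, (slice Φ S t i i).im = 0 ∧ 0 ≤ (slice Φ S t i i).re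

/-- The tensor incoherence conditions with parameter μ. -/
def Incoherent (Φ : Matrix (Fin n3) (Fin n3) ℂ) (Z : Tensor n1 n2 n3)
    (U : Tensor n1 r n3) (V : Tensor n2 r n3) (μ : ℝ) : Prop :=
  (∀ (i : Fin n1) (k : Fin n3),
      (frob (tprod Φ (tconj Φ U) (colBasis i k))) ^ 2
        ≤ μ * (∑ t, ((slice Φ Z t).rank : ℝ)) / (n1 * n3)) ∧
  (∀ (j : Fin n2) (k : Fin n3),
      (frob (tprod Φ (tconj Φ V) (colBasis j k))) ^ 2
        ≤ μ * (∑ t, ((slice Φ Z t).rank : ℝ)) / (n2 * n3))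

/-- Bernoulli measure on `Bool` with success probability ρ. -/
def berMeasure (ρ : ℝ) : Measure Bool :=
  ρ.toNNReal • Measure.dirac true + (1 - ρ).toNNReal • Measure.dirac false

instance (ρ : ℝ) : IsFiniteMeasure (berMeasure ρ) := by
  unfold berMeasure; infer_instance

/-- The i.i.d. Bernoulli sampling model `Ω ~ Ber(ρ)`. -/
def berPi (n1 n2 n3 : ℕ) (ρ : ℝ) : Measure ((Fin n1 × Fin n2 × Fin n3) → Bool) :=
  Measure.pi fun _ => berMeasure ρ

/-- The random set `Ω` determined by a Bernoulli sample. -/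
def omegaSet {n1 n2 n3 : ℕ} (ω : (Fin n1 × Fin n2 × Fin n3) → Bool) :
    Set (Fin n1 × Fin n2 × Fin n3) := {p | ω p = true}

end Tensor

open Tensor


section Helpers

open Tensor Matrix

variable {m n p : ℕ}

/-- Euclidean norm of a plain complex vector. -/
def vn {n : ℕ} (x : Fin n → ℂ) : ℝ := Real.sqrt (∑ i, Complex.normSq (x i))

lemma vn_nonneg (x : Fin n → ℂ) : 0 ≤ vn x := Real.sqrt_nonneg _

lemma ev_norm (x : Fin n → ℂ) :
    ‖(WithLp.equiv 2 (Fin n → ℂ)).symm x‖ = vn x := by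
  rw [EuclideanSpace.norm_eq, vn]
  congr 1
  refine Finset.sum_congr rfl fun i _ => ?_
  rw [← Complex.sq_norm]
  rfl

lemma ev_norm_toLp (x : Fin n → ℂ) : ‖WithLp.toLp 2 x‖ = vn x := ev_norm x

lemma specNormM_nonneg (M : Matrix (Fin m) (Fin n) ℂ) : 0 ≤ specNormM M :=
  norm_nonneg _

lemma spec_mulVec (M : Matrix (Fin m) (Fin n) ℂ) (x : Fin n → ℂ) :
    vn (M *ᵥ x) ≤ specNormM M * vn x := by
  have h := (LinearMap.toContinuousLinearMap (Matrix.toEuclideanLin M)).le_opNorm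
      ((WithLp.equiv 2 (Fin n → ℂ)).symm x)
  simpa [ev_norm, ev_norm_toLp, specNormM] using h

lemma spec_le (M : Matrix (Fin m) (Fin n) ℂ) {c : ℝ} (hc : 0 ≤ c)
    (h : ∀ x : Fin n → ℂ, vn (M *ᵥ x) ≤ c * vn x) : specNormM M ≤ c := by
  refine ContinuousLinearMap.opNorm_le_bound _ hc fun x => ?_
  have h' := h ((WithLp.equiv 2 (Fin n → ℂ)) x)
  have h2 : ‖x‖ = vn ((WithLp.equiv 2 (Fin n → ℂ)) x) := by
    rw [← ev_norm]; simp
  rw [h2]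
  simpa [ev_norm, ev_norm_toLp, Matrix.toEuclideanLin_apply] using h'

lemma abs_dot_mulVec (u : Fin m → ℂ) (M : Matrix (Fin m) (Fin n) ℂ) (x : Fin n → ℂ) :
    ‖star u ⬝ᵥ (M *ᵥ x)‖ ≤ vn u * (specNormM M * vn x) := by
  have h1 : star u ⬝ᵥ (M *ᵥ x)
      = inner ℂ ((WithLp.equiv 2 (Fin m → ℂ)).symm u) ((WithLp.equiv 2 (Fin m → ℂ)).symm (M *ᵥ x)) := by
    rw [dotProduct_comm]; exact (EuclideanSpace.inner_toLp_toLp u (M *ᵥ x)).symm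
  rw [h1]
  calc ‖_‖ ≤ ‖(WithLp.equiv 2 (Fin m → ℂ)).symm u‖ *
        ‖(WithLp.equiv 2 (Fin m → ℂ)).symm (M *ᵥ x)‖ := by
        exact
          norm_inner_le_norm (𝕜 := ℂ) ((WithLp.equiv 2 (Fin m → ℂ)).symm u)
            ((WithLp.equiv 2 (Fin m → ℂ)).symm (M *ᵥ x))
    _ ≤ vn u * (specNormM M * vn x) := by
        rw [ev_norm, ev_norm]
        exact mul_le_mul_of_nonneg_left (spec_mulVec M x) (vn_nonneg u)

lemma dot_star_self (x : Fin n → ℂ) :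
    star x ⬝ᵥ x = ((∑ i, Complex.normSq (x i) : ℝ) : ℂ) := by
  simp only [dotProduct, Pi.star_apply, Complex.ofReal_sum]
  refine Finset.sum_congr rfl fun i _ => ?_
  rw [show star (x i) = (starRingEnd ℂ) (x i) from rfl, ← Complex.normSq_eq_conj_mul_self]

lemma vn_sq (x : Fin n → ℂ) : (vn x) ^ 2 = ∑ i, Complex.normSq (x i) := by
  rw [vn, Real.sq_sqrt]
  exact Finset.sum_nonneg fun i _ => Complex.normSq_nonneg _

lemma vn_sq_eq_re (x : Fin n → ℂ) : (vn x) ^ 2 = (star x ⬝ᵥ x).re := by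
  rw [vn_sq, dot_star_self, Complex.ofReal_re]

/-- key adjoint identity for quadratic forms. -/
lemma dot_mulVec_conjT (M : Matrix (Fin m) (Fin n) ℂ) (x y : Fin n → ℂ) :
    star (M *ᵥ x) ⬝ᵥ (M *ᵥ y) = star x ⬝ᵥ ((Mᴴ * M) *ᵥ y) := by
  rw [star_mulVec, ← Matrix.dotProduct_mulVec, Matrix.mulVec_mulVec]

/-- The matrix Frobenius inner product `tr(Aᴴ B)` written as a sum. -/
def Mtinner (A B : Matrix (Fin m) (Fin n) ℂ) : ℂ :=
  ∑ a, ∑ b, (starRingEnd ℂ) (A a b) * B a b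

lemma Mtinner_eq_trace (A B : Matrix (Fin m) (Fin n) ℂ) :
    Mtinner A B = Matrix.trace (Aᴴ * B) := by
  rw [Mtinner, Matrix.trace]
  rw [Finset.sum_comm]
  refine Finset.sum_congr rfl fun b _ => ?_
  simp [Matrix.mul_apply, Matrix.diag, Matrix.conjTranspose_apply]

/-- Hermitian idempotent quadratic form bound. -/
lemma idem_le (E : Matrix (Fin n) (Fin n) ℂ) (hH : Eᴴ = E) (hI : E * E = E)
    (x : Fin n → ℂ) : (star x ⬝ᵥ (E *ᵥ x)).re ≤ (vn x) ^ 2 := by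
  have key : ∀ F : Matrix (Fin n) (Fin n) ℂ, Fᴴ = F → F * F = F →
      0 ≤ (star x ⬝ᵥ (F *ᵥ x)).re := by
    intro F hFH hFI
    have h1 : star x ⬝ᵥ (F *ᵥ x) = star (F *ᵥ x) ⬝ᵥ (F *ᵥ x) := by
      rw [dot_mulVec_conjT, hFH, hFI]
    rw [h1, dot_star_self, Complex.ofReal_re]
    exact Finset.sum_nonneg fun i _ => Complex.normSq_nonneg _
  have h2 := key (1 - E) (by rw [conjTranspose_sub, hH, conjTranspose_one])
    (by rw [mul_sub, sub_mul, sub_mul, one_mul, mul_one, hI]; noncomm_ring)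
  have h3 : star x ⬝ᵥ ((1 - E) *ᵥ x) = star x ⬝ᵥ x - star x ⬝ᵥ (E *ᵥ x) := by
    rw [Matrix.sub_mulVec, dotProduct_sub, Matrix.one_mulVec]
  rw [h3] at h2
  have := vn_sq_eq_re x
  simp only [Complex.sub_re] at h2
  linarith

end Helpers
section SVD

open Tensor Matrix
open scoped ComplexOrder

variable {m n p q : ℕ}

/-- A packaged singular value decomposition of a complex matrix. -/
structure SVDData (M : Matrix (Fin m) (Fin n) ℂ) where
  σ : Fin n → ℝ
  Um : Matrix (Fin m) (Fin n) ℂ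
  Vm : Matrix (Fin n) (Fin n) ℂ
  σ_nonneg : ∀ i, 0 ≤ σ i
  V_left : Vmᴴ * Vm = 1
  V_right : Vm * Vmᴴ = 1
  U_gram : Umᴴ * Um = Matrix.diagonal (fun i => if σ i = 0 then (0:ℂ) else 1)
  decomp : M = Um * Matrix.diagonal (fun i => (σ i : ℂ)) * Vmᴴ
  nuclear : nuclearNormM M = ∑ i, σ i

/-- Construction of an SVD from the spectral theorem for `Mᴴ * M`. -/
noncomputable def svdData (M : Matrix (Fin m) (Fin n) ℂ) : SVDData M := by
  classical
  set hH := Matrix.isHermitian_conjTranspose_mul_self M with hhH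
  set lam := hH.eigenvalues with hlam
  have hlam0 : ∀ i, 0 ≤ lam i := fun i =>
    Matrix.eigenvalues_conjTranspose_mul_self_nonneg M i
  set σ : Fin n → ℝ := fun i => Real.sqrt (lam i) with hσdef
  have hσ0 : ∀ i, 0 ≤ σ i := fun i => Real.sqrt_nonneg _
  have hσsq : ∀ i, σ i * σ i = lam i := fun i => Real.mul_self_sqrt (hlam0 i)
  have hlam_zero : ∀ i, σ i = 0 → lam i = 0 := by
    intro i h
    rw [← hσsq i, h, mul_zero]
  set Vm : Matrix (Fin n) (Fin n) ℂ := (hH.eigenvectorUnitary : Matrix (Fin n) (Fin n) ℂ)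
    with hVm
  have hVl : Vmᴴ * Vm = 1 := by
    have h := (Matrix.mem_unitaryGroup_iff').mp hH.eigenvectorUnitary.2
    rwa [Matrix.star_eq_conjTranspose] at h
  have hVr : Vm * Vmᴴ = 1 := by
    have h := (Matrix.mem_unitaryGroup_iff).mp hH.eigenvectorUnitary.2
    rwa [Matrix.star_eq_conjTranspose] at h
  set Dlam : Matrix (Fin n) (Fin n) ℂ := Matrix.diagonal (fun i => (lam i : ℂ)) with hDlam
  have hspec : Mᴴ * M = Vm * Dlam * Vmᴴ := by
    have h := hH.spectral_theorem
    rw [Unitary.conjStarAlgAut_apply, Matrix.star_eq_conjTranspose] at h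
    exact h
  -- the key sandwich identity
  have e1 : (Vmᴴ * Mᴴ) * (M * Vm) = Dlam := by
    calc (Vmᴴ * Mᴴ) * (M * Vm)
        = Vmᴴ * (Mᴴ * (M * Vm)) := Matrix.mul_assoc _ _ _
      _ = Vmᴴ * ((Mᴴ * M) * Vm) := by rw [← Matrix.mul_assoc Mᴴ M Vm]
      _ = Vmᴴ * ((Vm * Dlam * Vmᴴ) * Vm) := by rw [hspec]
      _ = Vmᴴ * ((Vm * Dlam) * (Vmᴴ * Vm)) := by rw [Matrix.mul_assoc (Vm * Dlam) Vmᴴ Vm]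
      _ = Vmᴴ * (Vm * Dlam) := by rw [hVl, Matrix.mul_one]
      _ = (Vmᴴ * Vm) * Dlam := (Matrix.mul_assoc _ _ _).symm
      _ = Dlam := by rw [hVl, Matrix.one_mul]
  set pinv : Fin n → ℂ := fun i => if σ i = 0 then 0 else ((σ i : ℂ))⁻¹ with hpinv
  set P : Matrix (Fin n) (Fin n) ℂ := Matrix.diagonal pinv with hP
  set Um : Matrix (Fin m) (Fin n) ℂ := M * Vm * P with hUm
  have hstar_pinv : star pinv = pinv := by
    funext i
    by_cases h : σ i = 0
    · simp [hpinv, h]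
    · simp only [hpinv, if_neg h, Pi.star_apply]
      rw [← Complex.ofReal_inv]
      exact Complex.conj_ofReal _
  have hPH : Pᴴ = P := by rw [hP, Matrix.diagonal_conjTranspose, hstar_pinv]
  have hgram : Umᴴ * Um = Matrix.diagonal (fun i => if σ i = 0 then (0:ℂ) else 1) := by
    have h1 : Umᴴ = Pᴴ * (Vmᴴ * Mᴴ) := by
      rw [hUm, Matrix.conjTranspose_mul, Matrix.conjTranspose_mul]
    calc Umᴴ * Um
        = (Pᴴ * (Vmᴴ * Mᴴ)) * ((M * Vm) * P) := by rw [h1, hUm]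
      _ = Pᴴ * ((Vmᴴ * Mᴴ) * ((M * Vm) * P)) := Matrix.mul_assoc _ _ _
      _ = Pᴴ * (((Vmᴴ * Mᴴ) * (M * Vm)) * P) := by
          rw [← Matrix.mul_assoc (Vmᴴ * Mᴴ) (M * Vm) P]
      _ = P * (Dlam * P) := by rw [e1, hPH]
      _ = Matrix.diagonal (fun i => if σ i = 0 then (0:ℂ) else 1) := by
          rw [hP, hDlam, Matrix.diagonal_mul_diagonal, Matrix.diagonal_mul_diagonal]
          apply congrArg Matrix.diagonal
          funext i
          by_cases h : σ i = 0
          · simp [hpinv, h]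
          · have hne : ((σ i : ℝ) : ℂ) ≠ 0 := Complex.ofReal_ne_zero.mpr h
            have hl : ((lam i : ℝ) : ℂ) = (σ i : ℂ) * (σ i : ℂ) := by
              rw [← hσsq i]; push_cast; ring
            simp only [hpinv, if_neg h]
            rw [hl]
            field_simp
  refine ⟨σ, Um, Vm, hσ0, hVl, hVr, hgram, ?_, rfl⟩
  -- decomp
  set d : Fin n → ℂ := fun i => if σ i = 0 then 0 else 1 with hd
  set e : Fin n → ℂ := fun i => 1 - d i with he
  set J : Matrix (Fin n) (Fin n) ℂ := Matrix.diagonal e with hJ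
  have hJH : Jᴴ = J := by
    rw [hJ, Matrix.diagonal_conjTranspose]
    apply congrArg Matrix.diagonal
    funext i
    by_cases h : σ i = 0 <;> simp [he, hd, h]
  have hX : (M * Vm) * J = 0 := by
    rw [← Matrix.conjTranspose_mul_self_eq_zero]
    have h1 : ((M * Vm) * J)ᴴ = Jᴴ * (Vmᴴ * Mᴴ) := by
      rw [Matrix.conjTranspose_mul, Matrix.conjTranspose_mul]
    calc ((M * Vm) * J)ᴴ * ((M * Vm) * J)
        = (Jᴴ * (Vmᴴ * Mᴴ)) * ((M * Vm) * J) := by rw [h1]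
      _ = Jᴴ * ((Vmᴴ * Mᴴ) * ((M * Vm) * J)) := Matrix.mul_assoc _ _ _
      _ = Jᴴ * (((Vmᴴ * Mᴴ) * (M * Vm)) * J) := by
          rw [← Matrix.mul_assoc (Vmᴴ * Mᴴ) (M * Vm) J]
      _ = J * (Dlam * J) := by rw [e1, hJH]
      _ = 0 := by
          rw [hJ, hDlam, Matrix.diagonal_mul_diagonal, Matrix.diagonal_mul_diagonal]
          have hz : (fun i => e i * ((lam i : ℂ) * e i)) = (fun _ => (0:ℂ)) := by
            funext i
            by_cases h : σ i = 0
            · simp [he, hd, h, hlam_zero i h]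
            · simp [he, hd, h]
          rw [hz, Matrix.diagonal_zero]
  have hps : Um * Matrix.diagonal (fun i => (σ i : ℂ)) = (M * Vm) * Matrix.diagonal d := by
    rw [hUm, Matrix.mul_assoc (M * Vm) P _, hP, Matrix.diagonal_mul_diagonal]
    have hfun : (fun i => pinv i * ((σ i : ℝ) : ℂ)) = d := by
      funext i
      by_cases h : σ i = 0
      · simp [hpinv, hd, h]
      · have hne : ((σ i : ℝ) : ℂ) ≠ 0 := Complex.ofReal_ne_zero.mpr h
        simp only [hpinv, hd, if_neg h]
        exact inv_mul_cancel₀ hne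
    rw [hfun]
  have h4 : (M * Vm) * Matrix.diagonal d = M * Vm := by
    have h5 : (M * Vm) * Matrix.diagonal d - M * Vm = -((M * Vm) * J) := by
      have hJ1 : J = 1 - Matrix.diagonal d := by
        rw [hJ, ← Matrix.diagonal_one, Matrix.diagonal_sub]
      rw [hJ1, Matrix.mul_sub, Matrix.mul_one]
      exact (neg_sub _ _).symm
    have := sub_eq_zero.mp (by rw [h5, hX, neg_zero])
    exact this
  rw [hps, h4, Matrix.mul_assoc, hVr, Matrix.mul_one]

end SVD
section SVDderived

open Tensor Matrix
open scoped ComplexOrder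

variable {m n p q : ℕ}

lemma m4 {a b c d e : ℕ} (A : Matrix (Fin a) (Fin b) ℂ) (B : Matrix (Fin b) (Fin c) ℂ)
    (C : Matrix (Fin c) (Fin d) ℂ) (E : Matrix (Fin d) (Fin e) ℂ) :
    (A * B) * (C * E) = A * (B * C) * E := by
  rw [Matrix.mul_assoc A B (C * E), ← Matrix.mul_assoc B C E, ← Matrix.mul_assoc A (B * C) E]

lemma spec_le_one_of_proj (Q : Matrix (Fin m) (Fin n) ℂ) (E : Matrix (Fin n) (Fin n) ℂ)
    (hE : Qᴴ * Q = E) (hEH : Eᴴ = E) (hEI : E * E = E) : specNormM Q ≤ 1 := by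
  refine spec_le _ zero_le_one fun x => ?_
  rw [one_mul]
  have h1 : (vn (Q *ᵥ x)) ^ 2 = (star x ⬝ᵥ (E *ᵥ x)).re := by
    rw [vn_sq_eq_re, ← hE]
    rw [show star (Q *ᵥ x) ⬝ᵥ (Q *ᵥ x) = star x ⬝ᵥ ((Qᴴ * Q) *ᵥ x) from dot_mulVec_conjT Q x x]
  have h3 : (vn (Q *ᵥ x)) ^ 2 ≤ (vn x) ^ 2 := by rw [h1]; exact idem_le E hEH hEI x
  have h4 := Real.sqrt_le_sqrt h3
  rwa [Real.sqrt_sq (vn_nonneg _), Real.sqrt_sq (vn_nonneg _)] at h4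

namespace SVDData

variable {M : Matrix (Fin m) (Fin n) ℂ} (D : SVDData M)

/-- 0/1 indicator of the nonzero singular values. -/
def dC : Fin n → ℂ := fun i => if D.σ i = 0 then 0 else 1

/-- The dual certificate `Q = U D Vᴴ`. -/
def Q : Matrix (Fin m) (Fin n) ℂ := D.Um * Matrix.diagonal D.dC * D.Vmᴴ

lemma dd_mul : Matrix.diagonal D.dC * Matrix.diagonal D.dC = Matrix.diagonal D.dC := by
  rw [Matrix.diagonal_mul_diagonal]
  apply congrArg Matrix.diagonal
  funext i
  by_cases h : D.σ i = 0 <;> simp [dC, h]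

lemma dd_star : star D.dC = D.dC := by
  funext i
  by_cases h : D.σ i = 0 <;> simp [dC, h]

lemma dd_conjT : (Matrix.diagonal D.dC)ᴴ = Matrix.diagonal D.dC := by
  rw [Matrix.diagonal_conjTranspose, D.dd_star]

lemma d_mul_σ : Matrix.diagonal D.dC * Matrix.diagonal (fun i => (D.σ i : ℂ))
    = Matrix.diagonal (fun i => (D.σ i : ℂ)) := by
  rw [Matrix.diagonal_mul_diagonal]
  apply congrArg Matrix.diagonal
  funext i
  by_cases h : D.σ i = 0 <;> simp [dC, h]

lemma gram_eq : D.Umᴴ * D.Um = Matrix.diagonal D.dC := D.U_gram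

lemma UH_M : D.Umᴴ * M = Matrix.diagonal (fun i => (D.σ i : ℂ)) * D.Vmᴴ := by
  calc D.Umᴴ * M
      = D.Umᴴ * (D.Um * Matrix.diagonal (fun i => (D.σ i : ℂ)) * D.Vmᴴ) := by rw [← D.decomp]
    _ = (D.Umᴴ * (D.Um * Matrix.diagonal (fun i => (D.σ i : ℂ)))) * D.Vmᴴ := by
        rw [← Matrix.mul_assoc]
    _ = ((D.Umᴴ * D.Um) * Matrix.diagonal (fun i => (D.σ i : ℂ))) * D.Vmᴴ := by
        rw [← Matrix.mul_assoc]
    _ = Matrix.diagonal (fun i => (D.σ i : ℂ)) * D.Vmᴴ := by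
        rw [D.gram_eq, D.d_mul_σ]

lemma Q_left {k : ℕ} (P : Matrix (Fin k) (Fin m) ℂ) (h : P * M = 0) : P * D.Q = 0 := by
  have hBS : (P * D.Um) * Matrix.diagonal (fun i => (D.σ i : ℂ)) = 0 := by
    calc (P * D.Um) * Matrix.diagonal (fun i => (D.σ i : ℂ))
        = P * (D.Um * Matrix.diagonal (fun i => (D.σ i : ℂ))) := Matrix.mul_assoc _ _ _
      _ = (P * (D.Um * Matrix.diagonal (fun i => (D.σ i : ℂ)))) * (D.Vmᴴ * D.Vm) := by
          rw [D.V_left, Matrix.mul_one]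
      _ = P * ((D.Um * Matrix.diagonal (fun i => (D.σ i : ℂ))) * D.Vmᴴ) * D.Vm :=
          m4 _ _ _ _
      _ = (P * M) * D.Vm := by rw [← D.decomp]
      _ = 0 := by rw [h, Matrix.zero_mul]
  have hBD : (P * D.Um) * Matrix.diagonal D.dC = 0 := by
    ext a j
    have h1 : (P * D.Um) a j * ((D.σ j : ℝ) : ℂ) = 0 := by
      have h0 := congrFun (congrFun hBS a) j
      rwa [Matrix.mul_diagonal] at h0
    rw [Matrix.mul_diagonal, Matrix.zero_apply]
    by_cases hz : D.σ j = 0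
    · simp [dC, hz]
    · have hne : ((D.σ j : ℝ) : ℂ) ≠ 0 := Complex.ofReal_ne_zero.mpr hz
      have h2 : (P * D.Um) a j = 0 := (mul_eq_zero.mp h1).resolve_right hne
      simp [dC, hz, h2]
  calc P * D.Q = ((P * D.Um) * Matrix.diagonal D.dC) * D.Vmᴴ := by
        rw [show D.Q = D.Um * Matrix.diagonal D.dC * D.Vmᴴ from rfl, ← Matrix.mul_assoc,
          ← Matrix.mul_assoc]
    _ = 0 := by rw [hBD, Matrix.zero_mul]

lemma Q_right {k : ℕ} (N : Matrix (Fin n) (Fin k) ℂ) (h : M * N = 0) : D.Q * N = 0 := by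
  have hSC : Matrix.diagonal (fun i => (D.σ i : ℂ)) * (D.Vmᴴ * N) = 0 := by
    calc Matrix.diagonal (fun i => (D.σ i : ℂ)) * (D.Vmᴴ * N)
        = (Matrix.diagonal (fun i => (D.σ i : ℂ)) * D.Vmᴴ) * N := (Matrix.mul_assoc _ _ _).symm
      _ = (D.Umᴴ * M) * N := by rw [D.UH_M]
      _ = D.Umᴴ * (M * N) := Matrix.mul_assoc _ _ _
      _ = 0 := by rw [h, Matrix.mul_zero]
  have hDC : Matrix.diagonal D.dC * (D.Vmᴴ * N) = 0 := by
    ext i j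
    have h1 : ((D.σ i : ℝ) : ℂ) * (D.Vmᴴ * N) i j = 0 := by
      have h0 := congrFun (congrFun hSC i) j
      rwa [Matrix.diagonal_mul] at h0
    rw [Matrix.diagonal_mul, Matrix.zero_apply]
    by_cases hz : D.σ i = 0
    · simp [dC, hz]
    · have hne : ((D.σ i : ℝ) : ℂ) ≠ 0 := Complex.ofReal_ne_zero.mpr hz
      have h2 : (D.Vmᴴ * N) i j = 0 := (mul_eq_zero.mp h1).resolve_left hne
      simp [dC, hz, h2]
  calc D.Q * N = D.Um * (Matrix.diagonal D.dC * (D.Vmᴴ * N)) := by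
        rw [show D.Q = D.Um * Matrix.diagonal D.dC * D.Vmᴴ from rfl, Matrix.mul_assoc,
          Matrix.mul_assoc]
    _ = 0 := by rw [hDC, Matrix.mul_zero]

lemma QH_eq : D.Qᴴ = D.Vm * (Matrix.diagonal D.dC * D.Umᴴ) := by
  rw [show D.Q = D.Um * Matrix.diagonal D.dC * D.Vmᴴ from rfl, Matrix.conjTranspose_mul,
    Matrix.conjTranspose_mul, Matrix.conjTranspose_conjTranspose, D.dd_conjT]

lemma QHQ : D.Qᴴ * D.Q = D.Vm * Matrix.diagonal D.dC * D.Vmᴴ := by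
  have h1 : D.Qᴴ * D.Q = D.Vm * ((Matrix.diagonal D.dC * D.Umᴴ) * (D.Um * Matrix.diagonal D.dC))
      * D.Vmᴴ := by
    rw [QH_eq, show D.Q = (D.Um * Matrix.diagonal D.dC) * D.Vmᴴ from rfl]
    exact m4 _ _ _ _
  rw [h1, m4 (Matrix.diagonal D.dC) D.Umᴴ D.Um (Matrix.diagonal D.dC), D.gram_eq,
    D.dd_mul, D.dd_mul]

lemma VdV_herm : (D.Vm * Matrix.diagonal D.dC * D.Vmᴴ)ᴴ = D.Vm * Matrix.diagonal D.dC * D.Vmᴴ := by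
  rw [Matrix.conjTranspose_mul, Matrix.conjTranspose_mul, Matrix.conjTranspose_conjTranspose,
    D.dd_conjT, Matrix.mul_assoc]

lemma VdV_idem : (D.Vm * Matrix.diagonal D.dC * D.Vmᴴ) * (D.Vm * Matrix.diagonal D.dC * D.Vmᴴ)
    = D.Vm * Matrix.diagonal D.dC * D.Vmᴴ := by
  have hmid : D.Vmᴴ * (D.Vm * Matrix.diagonal D.dC * D.Vmᴴ) = Matrix.diagonal D.dC * D.Vmᴴ := by
    rw [← Matrix.mul_assoc D.Vmᴴ (D.Vm * Matrix.diagonal D.dC) D.Vmᴴ,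
      ← Matrix.mul_assoc D.Vmᴴ D.Vm (Matrix.diagonal D.dC), D.V_left, Matrix.one_mul]
  calc (D.Vm * Matrix.diagonal D.dC * D.Vmᴴ) * (D.Vm * Matrix.diagonal D.dC * D.Vmᴴ)
      = (D.Vm * Matrix.diagonal D.dC) * (D.Vmᴴ * (D.Vm * Matrix.diagonal D.dC * D.Vmᴴ)) :=
        Matrix.mul_assoc _ _ _
    _ = (D.Vm * Matrix.diagonal D.dC) * (Matrix.diagonal D.dC * D.Vmᴴ) := by rw [hmid]
    _ = D.Vm * (Matrix.diagonal D.dC * Matrix.diagonal D.dC) * D.Vmᴴ := m4 _ _ _ _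
    _ = D.Vm * Matrix.diagonal D.dC * D.Vmᴴ := by rw [D.dd_mul]

lemma Q_spec : specNormM D.Q ≤ 1 :=
  spec_le_one_of_proj _ _ D.QHQ D.VdV_herm D.VdV_idem

lemma Q_inner : Mtinner D.Q M = ((∑ i, D.σ i : ℝ) : ℂ) := by
  rw [Mtinner_eq_trace]
  have h0 : D.Qᴴ * M = D.Vm * ((Matrix.diagonal D.dC * D.Umᴴ) * M) := by
    rw [QH_eq, Matrix.mul_assoc]
  rw [h0, Matrix.trace_mul_comm]
  have h2 : ((Matrix.diagonal D.dC * D.Umᴴ) * M) * D.Vm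
      = Matrix.diagonal (fun i => (D.σ i : ℂ)) := by
    calc ((Matrix.diagonal D.dC * D.Umᴴ) * M) * D.Vm
        = Matrix.diagonal D.dC * ((D.Umᴴ * M) * D.Vm) := by
          rw [Matrix.mul_assoc (Matrix.diagonal D.dC) D.Umᴴ M, Matrix.mul_assoc]
      _ = Matrix.diagonal D.dC * (Matrix.diagonal (fun i => (D.σ i : ℂ)) * (D.Vmᴴ * D.Vm)) := by
          rw [D.UH_M, Matrix.mul_assoc]
      _ = Matrix.diagonal (fun i => (D.σ i : ℂ)) := by
          rw [D.V_left, Matrix.mul_one, D.d_mul_σ]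
  rw [h2, Matrix.trace_diagonal]
  rw [Complex.ofReal_sum]

end SVDData

end SVDderived
section CoreLemmas

open Tensor Matrix
open scoped ComplexOrder

variable {m n p : ℕ}

namespace SVDData

variable {M : Matrix (Fin m) (Fin n) ℂ} (D : SVDData M)

lemma Dd_V {k : ℕ} (N : Matrix (Fin n) (Fin k) ℂ) (h : M * N = 0) :
    Matrix.diagonal D.dC * (D.Vmᴴ * N) = 0 := by
  have hSC : Matrix.diagonal (fun i => (D.σ i : ℂ)) * (D.Vmᴴ * N) = 0 := by
    calc Matrix.diagonal (fun i => (D.σ i : ℂ)) * (D.Vmᴴ * N)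
        = (Matrix.diagonal (fun i => (D.σ i : ℂ)) * D.Vmᴴ) * N := (Matrix.mul_assoc _ _ _).symm
      _ = (D.Umᴴ * M) * N := by rw [D.UH_M]
      _ = D.Umᴴ * (M * N) := Matrix.mul_assoc _ _ _
      _ = 0 := by rw [h, Matrix.mul_zero]
  ext i j
  have h1 : ((D.σ i : ℝ) : ℂ) * (D.Vmᴴ * N) i j = 0 := by
    have h0 := congrFun (congrFun hSC i) j
    rwa [Matrix.diagonal_mul] at h0
  rw [Matrix.diagonal_mul, Matrix.zero_apply]
  by_cases hz : D.σ i = 0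
  · simp [dC, hz]
  · have hne : ((D.σ i : ℝ) : ℂ) ≠ 0 := Complex.ofReal_ne_zero.mpr hz
    have h2 : (D.Vmᴴ * N) i j = 0 := (mul_eq_zero.mp h1).resolve_left hne
    simp [dC, hz, h2]

lemma G_spec {r : ℕ} (U0 : Matrix (Fin m) (Fin r) ℂ) (V0 : Matrix (Fin n) (Fin r) ℂ)
    (hU0 : U0ᴴ * U0 = 1) (hV0 : V0ᴴ * V0 = 1) (hUM : U0ᴴ * M = 0) (hMV : M * V0 = 0) :
    specNormM (U0 * V0ᴴ + D.Q) ≤ 1 := by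
  have hQU : U0ᴴ * D.Q = 0 := D.Q_left U0ᴴ hUM
  have hDdV : Matrix.diagonal D.dC * (D.Vmᴴ * V0) = 0 := D.Dd_V V0 hMV
  set E : Matrix (Fin n) (Fin n) ℂ := V0 * V0ᴴ + D.Vm * Matrix.diagonal D.dC * D.Vmᴴ with hEdef
  have hcross1 : (D.Vm * Matrix.diagonal D.dC * D.Vmᴴ) * (V0 * V0ᴴ) = 0 := by
    calc (D.Vm * Matrix.diagonal D.dC * D.Vmᴴ) * (V0 * V0ᴴ)
        = (D.Vm * Matrix.diagonal D.dC) * (D.Vmᴴ * V0) * V0ᴴ := m4 _ _ _ _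
      _ = D.Vm * (Matrix.diagonal D.dC * (D.Vmᴴ * V0)) * V0ᴴ := by
          rw [Matrix.mul_assoc D.Vm (Matrix.diagonal D.dC) (D.Vmᴴ * V0)]
      _ = 0 := by rw [hDdV, Matrix.mul_zero, Matrix.zero_mul]
  have hcross2 : (V0 * V0ᴴ) * (D.Vm * Matrix.diagonal D.dC * D.Vmᴴ) = 0 := by
    have h := congrArg Matrix.conjTranspose hcross1
    rwa [Matrix.conjTranspose_mul, D.VdV_herm, Matrix.conjTranspose_mul,
      Matrix.conjTranspose_conjTranspose, Matrix.conjTranspose_zero] at h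
  have hVV : (V0 * V0ᴴ) * (V0 * V0ᴴ) = V0 * V0ᴴ := by
    calc (V0 * V0ᴴ) * (V0 * V0ᴴ) = V0 * (V0ᴴ * V0) * V0ᴴ := m4 _ _ _ _
      _ = V0 * V0ᴴ := by rw [hV0, Matrix.mul_one]
  have hEH : Eᴴ = E := by
    rw [hEdef, Matrix.conjTranspose_add, Matrix.conjTranspose_mul,
      Matrix.conjTranspose_conjTranspose, D.VdV_herm]
  have hEI : E * E = E := by
    rw [hEdef, Matrix.add_mul, Matrix.mul_add, Matrix.mul_add, hVV, hcross1, hcross2,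
      D.VdV_idem, add_zero, zero_add]
  refine spec_le_one_of_proj _ E ?_ hEH hEI
  -- (U0 V0ᴴ + Q)ᴴ (U0 V0ᴴ + Q) = E
  have hQHU : D.Qᴴ * (U0 * V0ᴴ) = 0 := by
    have hQU' : D.Qᴴ * U0 = 0 := by
      have h := congrArg Matrix.conjTranspose hQU
      rwa [Matrix.conjTranspose_mul, Matrix.conjTranspose_conjTranspose,
        Matrix.conjTranspose_zero] at h
    rw [← Matrix.mul_assoc, hQU', Matrix.zero_mul]
  have hUQ : (U0 * V0ᴴ)ᴴ * D.Q = 0 := by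
    rw [Matrix.conjTranspose_mul, Matrix.conjTranspose_conjTranspose, Matrix.mul_assoc,
      hQU, Matrix.mul_zero]
  rw [Matrix.conjTranspose_add, Matrix.add_mul, Matrix.mul_add, Matrix.mul_add, hUQ, hQHU,
    D.QHQ, hEdef]
  have : (U0 * V0ᴴ)ᴴ * (U0 * V0ᴴ) = V0 * V0ᴴ := by
    rw [Matrix.conjTranspose_mul, Matrix.conjTranspose_conjTranspose]
    calc (V0 * U0ᴴ) * (U0 * V0ᴴ) = V0 * (U0ᴴ * U0) * V0ᴴ := m4 _ _ _ _
      _ = V0 * V0ᴴ := by rw [hU0, Matrix.mul_one]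
  rw [this, add_zero, zero_add]

end SVDData

lemma vn_col_sq {k l : ℕ} (W : Matrix (Fin k) (Fin l) ℂ) (j : Fin l) :
    (vn (fun a => W a j)) ^ 2 = ((Wᴴ * W) j j).re := by
  rw [vn_sq]
  have : (Wᴴ * W) j j = ∑ a, (starRingEnd ℂ) (W a j) * (W a j) := by
    simp [Matrix.mul_apply, Matrix.conjTranspose_apply]
  rw [this]
  rw [show (∑ a, (starRingEnd ℂ) (W a j) * (W a j))
      = ((∑ a, Complex.normSq (W a j) : ℝ) : ℂ) from ?_]
  · rw [Complex.ofReal_re]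
  · rw [Complex.ofReal_sum]
    refine Finset.sum_congr rfl fun a _ => ?_
    rw [← Complex.normSq_eq_conj_mul_self]

lemma vn_col_le_one {k l : ℕ} (W : Matrix (Fin k) (Fin l) ℂ) (g : Fin l → ℂ)
    (hW : Wᴴ * W = Matrix.diagonal g) (hg : ∀ j, (g j).re ≤ 1) (j : Fin l) :
    vn (fun a => W a j) ≤ 1 := by
  have h1 : (vn (fun a => W a j)) ^ 2 ≤ 1 := by
    rw [vn_col_sq, hW, Matrix.diagonal_apply_eq]
    exact hg j
  have h4 := Real.sqrt_le_sqrt h1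
  rwa [Real.sqrt_sq (vn_nonneg _), Real.sqrt_one] at h4

/-- Matrix duality core inequality: `Re⟨G, U Σ Vᴴ⟩ ≤ ‖G‖ Σσ`. -/
lemma core (G : Matrix (Fin m) (Fin n) ℂ) (U0 : Matrix (Fin m) (Fin p) ℂ)
    (V0 : Matrix (Fin n) (Fin p) ℂ) (σ : Fin p → ℝ) (hσ : ∀ j, 0 ≤ σ j)
    (hu : ∀ j, vn (fun a => U0 a j) ≤ 1) (hv : ∀ j, vn (fun b => V0 b j) ≤ 1) :
    (Mtinner G (U0 * Matrix.diagonal (fun j => (σ j : ℂ)) * V0ᴴ)).re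
      ≤ specNormM G * ∑ j, σ j := by
  set c : Fin p → ℂ := fun j => star (fun a => U0 a j) ⬝ᵥ (G *ᵥ fun b => V0 b j) with hc
  have h0 : Mtinner G (U0 * Matrix.diagonal (fun j => (σ j : ℂ)) * V0ᴴ)
      = Matrix.trace ((V0ᴴ * (Gᴴ * U0)) * Matrix.diagonal (fun j => (σ j : ℂ))) := by
    rw [Mtinner_eq_trace]
    rw [show Gᴴ * (U0 * Matrix.diagonal (fun j => (σ j : ℂ)) * V0ᴴ)
        = (Gᴴ * (U0 * Matrix.diagonal (fun j => (σ j : ℂ)))) * V0ᴴ from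
      (Matrix.mul_assoc _ _ _).symm]
    rw [Matrix.trace_mul_comm]
    rw [← Matrix.mul_assoc Gᴴ U0 (Matrix.diagonal (fun j => (σ j : ℂ)))]
    rw [← Matrix.mul_assoc V0ᴴ (Gᴴ * U0) (Matrix.diagonal (fun j => (σ j : ℂ)))]
  have h1 : Matrix.trace ((V0ᴴ * (Gᴴ * U0)) * Matrix.diagonal (fun j => (σ j : ℂ)))
      = ∑ j, (V0ᴴ * (Gᴴ * U0)) j j * ((σ j : ℝ) : ℂ) := by
    rw [Matrix.trace]
    refine Finset.sum_congr rfl fun j _ => ?_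
    rw [Matrix.diag]
    rw [Matrix.mul_diagonal]
  have h2 : ∀ j, (V0ᴴ * (Gᴴ * U0)) j j = (starRingEnd ℂ) (c j) := by
    intro j
    simp only [hc, Matrix.mul_apply, Matrix.conjTranspose_apply, Matrix.mulVec,
      dotProduct, Pi.star_apply, map_sum, Finset.mul_sum]
    rw [Finset.sum_comm]
    refine Finset.sum_congr rfl fun a _ => Finset.sum_congr rfl fun b _ => ?_
    simp only [Complex.star_def, _root_.map_mul, Complex.conj_conj]
    ring
  have habs : ∀ j, ‖c j‖ ≤ specNormM G := by
    intro j
    calc ‖c j‖ ≤ vn (fun a => U0 a j) * (specNormM G * vn (fun b => V0 b j)) :=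
          abs_dot_mulVec _ _ _
      _ ≤ 1 * (specNormM G * 1) := by
          refine mul_le_mul (hu j) ?_ ?_ zero_le_one
          · exact mul_le_mul_of_nonneg_left (hv j) (specNormM_nonneg G)
          · exact mul_nonneg (specNormM_nonneg G) (vn_nonneg _)
      _ = specNormM G := by ring
  rw [h0, h1]
  rw [show (∑ j, (V0ᴴ * (Gᴴ * U0)) j j * ((σ j : ℝ) : ℂ)).re
      = ∑ j, ((V0ᴴ * (Gᴴ * U0)) j j * ((σ j : ℝ) : ℂ)).re from Complex.re_sum _ _]
  have hterm : ∀ j, ((V0ᴴ * (Gᴴ * U0)) j j * ((σ j : ℝ) : ℂ)).re ≤ specNormM G * σ j := by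
    intro j
    rw [h2 j, Complex.mul_re, Complex.ofReal_re, Complex.ofReal_im, mul_zero, sub_zero,
      Complex.conj_re]
    calc (c j).re * σ j ≤ ‖c j‖ * σ j :=
          mul_le_mul_of_nonneg_right (Complex.re_le_norm _) (hσ j)
      _ ≤ specNormM G * σ j := mul_le_mul_of_nonneg_right (habs j) (hσ j)
  calc ∑ j, ((V0ᴴ * (Gᴴ * U0)) j j * ((σ j : ℝ) : ℂ)).re ≤ ∑ j, specNormM G * σ j :=
        Finset.sum_le_sum fun j _ => hterm j
    _ = specNormM G * ∑ j, σ j := by rw [Finset.mul_sum]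

/-- Duality: `Re⟨G, M⟩ ≤ ‖G‖ ‖M‖_*`. -/
lemma Mtinner_le_spec_nuclear (G M : Matrix (Fin m) (Fin n) ℂ) :
    (Mtinner G M).re ≤ specNormM G * nuclearNormM M := by
  obtain D := svdData M
  have h := core G D.Um D.Vm D.σ D.σ_nonneg
    (fun j => vn_col_le_one D.Um _ D.U_gram (fun j => by by_cases h : D.σ j = 0 <;> simp [h]) j)
    (fun j => vn_col_le_one D.Vm _ D.V_left (fun j => by simp [Matrix.one_apply]) j)
  rw [← D.decomp] at h
  rw [D.nuclear]
  exact h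

end CoreLemmas
section TensorSlices

open Tensor Matrix

variable {n1 n2 n3 n4 r : ℕ} {Φ : Matrix (Fin n3) (Fin n3) ℂ}

lemma unitary_right (hΦ : Φ ∈ Matrix.unitaryGroup (Fin n3) ℂ) : Φ * Φᴴ = 1 := by
  have h := (Matrix.mem_unitaryGroup_iff).mp hΦ
  rwa [Matrix.star_eq_conjTranspose] at h

lemma unitary_left (hΦ : Φ ∈ Matrix.unitaryGroup (Fin n3) ℂ) : Φᴴ * Φ = 1 := by
  have h := (Matrix.mem_unitaryGroup_iff').mp hΦ
  rwa [Matrix.star_eq_conjTranspose] at h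

lemma slice_apply (A : Tensor n1 n2 n3) (t : Fin n3) (i : Fin n1) (j : Fin n2) :
    slice Φ A t i j = (Φ *ᵥ (A i j)) t := rfl

lemma slice_unslice (hΦ : Φ ∈ Matrix.unitaryGroup (Fin n3) ℂ)
    (Mf : Fin n3 → Matrix (Fin n1) (Fin n2) ℂ) (t : Fin n3) :
    slice Φ (unslice Φ Mf) t = Mf t := by
  ext i j
  show ∑ k, Φ t k * (∑ s, (starRingEnd ℂ) (Φ s k) * Mf s i j) = Mf t i j
  have h1 : ∀ k, Φ t k * (∑ s, (starRingEnd ℂ) (Φ s k) * Mf s i j)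
      = ∑ s, Φ t k * (starRingEnd ℂ) (Φ s k) * Mf s i j := by
    intro k
    rw [Finset.mul_sum]
    exact Finset.sum_congr rfl fun s _ => by ring
  rw [Finset.sum_congr rfl fun k _ => h1 k, Finset.sum_comm]
  have h2 : ∀ s, ∑ k, Φ t k * (starRingEnd ℂ) (Φ s k) * Mf s i j
      = (1 : Matrix (Fin n3) (Fin n3) ℂ) t s * Mf s i j := by
    intro s
    rw [← Finset.sum_mul]
    congr 1
    rw [← unitary_right hΦ]
    simp [Matrix.mul_apply, Matrix.conjTranspose_apply]
  rw [Finset.sum_congr rfl fun s _ => h2 s]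
  simp [Matrix.one_apply, ite_mul]

lemma unslice_slice (hΦ : Φ ∈ Matrix.unitaryGroup (Fin n3) ℂ) (A : Tensor n1 n2 n3) :
    unslice Φ (fun t => slice Φ A t) = A := by
  funext i j k
  show ∑ t, (starRingEnd ℂ) (Φ t k) * (∑ k', Φ t k' * A i j k') = A i j k
  have h1 : ∀ t, (starRingEnd ℂ) (Φ t k) * (∑ k', Φ t k' * A i j k')
      = ∑ k', (starRingEnd ℂ) (Φ t k) * Φ t k' * A i j k' := by
    intro t
    rw [Finset.mul_sum]
    exact Finset.sum_congr rfl fun k' _ => by ring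
  rw [Finset.sum_congr rfl fun t _ => h1 t, Finset.sum_comm]
  have h2 : ∀ k', ∑ t, (starRingEnd ℂ) (Φ t k) * Φ t k' * A i j k'
      = (1 : Matrix (Fin n3) (Fin n3) ℂ) k k' * A i j k' := by
    intro k'
    rw [← Finset.sum_mul]
    congr 1
    rw [← unitary_left hΦ]
    simp [Matrix.mul_apply, Matrix.conjTranspose_apply]
  rw [Finset.sum_congr rfl fun k' _ => h2 k']
  simp [Matrix.one_apply, ite_mul]

lemma tensor_ext_of_slices (hΦ : Φ ∈ Matrix.unitaryGroup (Fin n3) ℂ) {A B : Tensor n1 n2 n3}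
    (h : ∀ t, slice Φ A t = slice Φ B t) : A = B := by
  calc A = unslice Φ (fun t => slice Φ A t) := (unslice_slice hΦ A).symm
    _ = unslice Φ (fun t => slice Φ B t) := congrArg (unslice Φ) (funext h)
    _ = B := unslice_slice hΦ B

lemma slice_tprod (hΦ : Φ ∈ Matrix.unitaryGroup (Fin n3) ℂ) (A : Tensor n1 n2 n3)
    (B : Tensor n2 n4 n3) (t : Fin n3) :
    slice Φ (tprod Φ A B) t = slice Φ A t * slice Φ B t := by
  show slice Φ (unslice Φ fun s => slice Φ A s * slice Φ B s) t = _
  rw [slice_unslice hΦ]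

lemma slice_tconj (hΦ : Φ ∈ Matrix.unitaryGroup (Fin n3) ℂ) (A : Tensor n1 n2 n3) (t : Fin n3) :
    slice Φ (tconj Φ A) t = (slice Φ A t)ᴴ := by
  show slice Φ (unslice Φ fun s => (slice Φ A s)ᴴ) t = _
  rw [slice_unslice hΦ]

lemma slice_add (A B : Tensor n1 n2 n3) (t : Fin n3) :
    slice Φ (A + B) t = slice Φ A t + slice Φ B t := by
  ext i j
  show ∑ k, Φ t k * (A i j k + B i j k) = _
  rw [show (slice Φ A t + slice Φ B t) i j = slice Φ A t i j + slice Φ B t i j from rfl]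
  show _ = (∑ k, Φ t k * A i j k) + ∑ k, Φ t k * B i j k
  rw [← Finset.sum_add_distrib]
  exact Finset.sum_congr rfl fun k _ => by ring

lemma slice_sub (A B : Tensor n1 n2 n3) (t : Fin n3) :
    slice Φ (A - B) t = slice Φ A t - slice Φ B t := by
  ext i j
  show ∑ k, Φ t k * (A i j k - B i j k) = _
  rw [show (slice Φ A t - slice Φ B t) i j = slice Φ A t i j - slice Φ B t i j from rfl]
  show _ = (∑ k, Φ t k * A i j k) - ∑ k, Φ t k * B i j k
  rw [← Finset.sum_sub_distrib]
  exact Finset.sum_congr rfl fun k _ => by ring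

lemma tinner_slices (hΦ : Φ ∈ Matrix.unitaryGroup (Fin n3) ℂ) (A B : Tensor n1 n2 n3) :
    tinner A B = ∑ t, Mtinner (slice Φ A t) (slice Φ B t) := by
  have key : ∀ (i : Fin n1) (j : Fin n2),
      ∑ t, (starRingEnd ℂ) (slice Φ A t i j) * slice Φ B t i j
        = ∑ k, (starRingEnd ℂ) (A i j k) * B i j k := by
    intro i j
    have h1 : ∑ t, (starRingEnd ℂ) (slice Φ A t i j) * slice Φ B t i j
        = star (Φ *ᵥ A i j) ⬝ᵥ (Φ *ᵥ B i j) := by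
      simp only [dotProduct, Pi.star_apply, slice_apply]
      rfl
    rw [h1, dot_mulVec_conjT, unitary_left hΦ, Matrix.one_mulVec]
    rfl
  calc tinner A B = ∑ i, ∑ j, ∑ k, (starRingEnd ℂ) (A i j k) * B i j k := rfl
    _ = ∑ i, ∑ j, ∑ t, (starRingEnd ℂ) (slice Φ A t i j) * slice Φ B t i j := by
        refine Finset.sum_congr rfl fun i _ => Finset.sum_congr rfl fun j _ => ?_
        exact (key i j).symm
    _ = ∑ i, ∑ t, ∑ j, (starRingEnd ℂ) (slice Φ A t i j) * slice Φ B t i j := by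
        refine Finset.sum_congr rfl fun i _ => ?_
        exact Finset.sum_comm
    _ = ∑ t, ∑ i, ∑ j, (starRingEnd ℂ) (slice Φ A t i j) * slice Φ B t i j :=
        Finset.sum_comm
    _ = ∑ t, Mtinner (slice Φ A t) (slice Φ B t) := rfl

lemma tinner_sub_left (A B C : Tensor n1 n2 n3) :
    tinner (A - B) C = tinner A C - tinner B C := by
  unfold tinner
  rw [← Finset.sum_sub_distrib]
  refine Finset.sum_congr rfl fun i _ => ?_
  rw [← Finset.sum_sub_distrib]
  refine Finset.sum_congr rfl fun j _ => ?_
  rw [← Finset.sum_sub_distrib]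
  refine Finset.sum_congr rfl fun k _ => ?_
  show (starRingEnd ℂ) (A i j k - B i j k) * C i j k = _
  rw [map_sub]
  ring

lemma tinner_add_left (A B C : Tensor n1 n2 n3) :
    tinner (A + B) C = tinner A C + tinner B C := by
  unfold tinner
  rw [← Finset.sum_add_distrib]
  refine Finset.sum_congr rfl fun i _ => ?_
  rw [← Finset.sum_add_distrib]
  refine Finset.sum_congr rfl fun j _ => ?_
  rw [← Finset.sum_add_distrib]
  refine Finset.sum_congr rfl fun k _ => ?_
  show (starRingEnd ℂ) (A i j k + B i j k) * C i j k = _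
  rw [map_add]
  ring

/-- Cauchy–Schwarz for the tensor inner product. -/
lemma abs_tinner_le (A B : Tensor n1 n2 n3) :
    ‖tinner A B‖ ≤ frob A * frob B := by
  classical
  set x : EuclideanSpace ℂ (Fin n1 × Fin n2 × Fin n3) :=
    (WithLp.equiv 2 _).symm (fun p => A p.1 p.2.1 p.2.2) with hx
  set y : EuclideanSpace ℂ (Fin n1 × Fin n2 × Fin n3) :=
    (WithLp.equiv 2 _).symm (fun p => B p.1 p.2.1 p.2.2) with hy
  have h1 : tinner A B = inner ℂ x y := by
    rw [hx, hy, EuclideanSpace.inner_eq_star_dotProduct, dotProduct_comm]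
    show tinner A B = ∑ p : Fin n1 × Fin n2 × Fin n3,
      (starRingEnd ℂ) (A p.1 p.2.1 p.2.2) * B p.1 p.2.1 p.2.2
    rw [Fintype.sum_prod_type]
    refine Finset.sum_congr rfl fun i _ => ?_
    rw [Fintype.sum_prod_type]
  have h2 : ‖x‖ = frob A := by
    rw [hx, EuclideanSpace.norm_eq, frob]
    congr 1
    rw [Fintype.sum_prod_type]
    refine Finset.sum_congr rfl fun i _ => ?_
    rw [Fintype.sum_prod_type]
    refine Finset.sum_congr rfl fun j _ => Finset.sum_congr rfl fun k _ => ?_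
    rw [← Complex.sq_norm]
    rfl
  have h3 : ‖y‖ = frob B := by
    rw [hy, EuclideanSpace.norm_eq, frob]
    congr 1
    rw [Fintype.sum_prod_type]
    refine Finset.sum_congr rfl fun i _ => ?_
    rw [Fintype.sum_prod_type]
    refine Finset.sum_congr rfl fun j _ => Finset.sum_congr rfl fun k _ => ?_
    rw [← Complex.sq_norm]
    rfl
  rw [h1, ← h2, ← h3]
  exact norm_inner_le_norm (𝕜 := ℂ) x y

lemma frob_nonneg (A : Tensor n1 n2 n3) : 0 ≤ frob A := Real.sqrt_nonneg _

lemma frob_sub_comm (A B : Tensor n1 n2 n3) : frob (A - B) = frob (B - A) := by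
  unfold frob
  congr 1
  refine Finset.sum_congr rfl fun i _ => Finset.sum_congr rfl fun j _ =>
    Finset.sum_congr rfl fun k _ => ?_
  show Complex.normSq (A i j k - B i j k) = Complex.normSq (B i j k - A i j k)
  rw [← neg_sub, Complex.normSq_neg]

end TensorSlices
section ProjT

open Tensor Matrix

variable {n1 n2 n3 n4 r : ℕ} {Φ : Matrix (Fin n3) (Fin n3) ℂ}

/-- The slice-wise action of `P_T`. -/
def fT {a b : ℕ} (P : Matrix (Fin a) (Fin a) ℂ) (Q : Matrix (Fin b) (Fin b) ℂ)
    (X : Matrix (Fin a) (Fin b) ℂ) : Matrix (Fin a) (Fin b) ℂ :=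
  P * X + X * Q - P * X * Q

lemma Mtinner_add_left {a b : ℕ} (A B C : Matrix (Fin a) (Fin b) ℂ) :
    Mtinner (A + B) C = Mtinner A C + Mtinner B C := by
  unfold Mtinner
  rw [← Finset.sum_add_distrib]
  refine Finset.sum_congr rfl fun i _ => ?_
  rw [← Finset.sum_add_distrib]
  refine Finset.sum_congr rfl fun j _ => ?_
  show (starRingEnd ℂ) (A i j + B i j) * C i j = _
  rw [map_add]; ring

lemma Mtinner_sub_left {a b : ℕ} (A B C : Matrix (Fin a) (Fin b) ℂ) :
    Mtinner (A - B) C = Mtinner A C - Mtinner B C := by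
  unfold Mtinner
  rw [← Finset.sum_sub_distrib]
  refine Finset.sum_congr rfl fun i _ => ?_
  rw [← Finset.sum_sub_distrib]
  refine Finset.sum_congr rfl fun j _ => ?_
  show (starRingEnd ℂ) (A i j - B i j) * C i j = _
  rw [map_sub]; ring

lemma Mtinner_add_right {a b : ℕ} (A B C : Matrix (Fin a) (Fin b) ℂ) :
    Mtinner A (B + C) = Mtinner A B + Mtinner A C := by
  unfold Mtinner
  rw [← Finset.sum_add_distrib]
  refine Finset.sum_congr rfl fun i _ => ?_
  rw [← Finset.sum_add_distrib]
  refine Finset.sum_congr rfl fun j _ => ?_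
  show (starRingEnd ℂ) (A i j) * (B i j + C i j) = _
  ring

lemma Mtinner_sub_right {a b : ℕ} (A B C : Matrix (Fin a) (Fin b) ℂ) :
    Mtinner A (B - C) = Mtinner A B - Mtinner A C := by
  unfold Mtinner
  rw [← Finset.sum_sub_distrib]
  refine Finset.sum_congr rfl fun i _ => ?_
  rw [← Finset.sum_sub_distrib]
  refine Finset.sum_congr rfl fun j _ => ?_
  show (starRingEnd ℂ) (A i j) * (B i j - C i j) = _
  ring

lemma Mtinner_mul_left {a b c : ℕ} (P : Matrix (Fin a) (Fin b) ℂ)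
    (A : Matrix (Fin b) (Fin c) ℂ) (B : Matrix (Fin a) (Fin c) ℂ) :
    Mtinner (P * A) B = Mtinner A (Pᴴ * B) := by
  rw [Mtinner_eq_trace, Mtinner_eq_trace, Matrix.conjTranspose_mul, Matrix.mul_assoc]

lemma Mtinner_mul_right {a b c : ℕ} (A : Matrix (Fin a) (Fin b) ℂ)
    (Q : Matrix (Fin b) (Fin c) ℂ) (B : Matrix (Fin a) (Fin c) ℂ) :
    Mtinner (A * Q) B = Mtinner A (B * Qᴴ) := by
  rw [Mtinner_eq_trace, Mtinner_eq_trace, Matrix.conjTranspose_mul, Matrix.mul_assoc,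
    Matrix.trace_mul_comm, Matrix.mul_assoc]

lemma fT_adj {a b : ℕ} {P : Matrix (Fin a) (Fin a) ℂ} {Q : Matrix (Fin b) (Fin b) ℂ}
    (hP : Pᴴ = P) (hQ : Qᴴ = Q) (A B : Matrix (Fin a) (Fin b) ℂ) :
    Mtinner (fT P Q A) B = Mtinner A (fT P Q B) := by
  unfold fT
  rw [Mtinner_sub_left, Mtinner_add_left, Mtinner_sub_right, Mtinner_add_right]
  rw [Mtinner_mul_left, hP, Mtinner_mul_right, hQ]
  congr 1
  rw [Mtinner_mul_right, hQ, Mtinner_mul_left, hP, Matrix.mul_assoc]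

lemma fT_idem {a b : ℕ} {P : Matrix (Fin a) (Fin a) ℂ} {Q : Matrix (Fin b) (Fin b) ℂ}
    (hP : P * P = P) (hQ : Q * Q = Q) (X : Matrix (Fin a) (Fin b) ℂ) :
    fT P Q (fT P Q X) = fT P Q X := by
  have hPf : P * fT P Q X = P * X := by
    unfold fT
    rw [Matrix.mul_sub, Matrix.mul_add]
    rw [← Matrix.mul_assoc P P X, hP]
    rw [← Matrix.mul_assoc P X Q]
    rw [← Matrix.mul_assoc P (P * X) Q, ← Matrix.mul_assoc P P X, hP]
    abel
  have hfQ : fT P Q X * Q = X * Q := by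
    unfold fT
    rw [Matrix.sub_mul, Matrix.add_mul, Matrix.mul_assoc X Q Q, hQ,
      Matrix.mul_assoc (P * X) Q Q, hQ]
    abel
  show P * fT P Q X + fT P Q X * Q - P * fT P Q X * Q = fT P Q X
  rw [show P * fT P Q X * Q = (P * fT P Q X) * Q from rfl, hPf, hfQ]
  rfl

lemma fT_sub {a b : ℕ} (P : Matrix (Fin a) (Fin a) ℂ) (Q : Matrix (Fin b) (Fin b) ℂ)
    (X Y : Matrix (Fin a) (Fin b) ℂ) :
    fT P Q (X - Y) = fT P Q X - fT P Q Y := by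
  unfold fT
  rw [Matrix.mul_sub, Matrix.sub_mul, Matrix.sub_mul]
  abel

lemma fT_fix_left {a b : ℕ} {P : Matrix (Fin a) (Fin a) ℂ} {Q : Matrix (Fin b) (Fin b) ℂ}
    {A : Matrix (Fin a) (Fin b) ℂ} (h : P * A = A) : fT P Q A = A := by
  unfold fT
  rw [h]
  abel

lemma fT_kill {a b : ℕ} {P : Matrix (Fin a) (Fin a) ℂ} {Q : Matrix (Fin b) (Fin b) ℂ}
    {A : Matrix (Fin a) (Fin b) ℂ} (hP : P * A = 0) (hQ : A * Q = 0) : fT P Q A = 0 := by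
  unfold fT
  rw [hP, hQ, Matrix.zero_mul]
  abel

lemma fT_perp_left {a b rr : ℕ} (U0 : Matrix (Fin a) (Fin rr) ℂ)
    (Q : Matrix (Fin b) (Fin b) ℂ) (hU : U0ᴴ * U0 = 1) (X : Matrix (Fin a) (Fin b) ℂ) :
    U0ᴴ * (X - fT (U0 * U0ᴴ) Q X) = 0 := by
  have hUP : U0ᴴ * (U0 * U0ᴴ) = U0ᴴ := by rw [← Matrix.mul_assoc, hU, Matrix.one_mul]
  unfold fT
  rw [Matrix.mul_sub, Matrix.mul_sub, Matrix.mul_add]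
  rw [← Matrix.mul_assoc U0ᴴ (U0 * U0ᴴ) X, hUP]
  rw [← Matrix.mul_assoc U0ᴴ X Q]
  rw [← Matrix.mul_assoc U0ᴴ (U0 * U0ᴴ * X) Q, ← Matrix.mul_assoc U0ᴴ (U0 * U0ᴴ) X, hUP]
  abel

lemma fT_perp_right {a b rr : ℕ} (P : Matrix (Fin a) (Fin a) ℂ)
    (V0 : Matrix (Fin b) (Fin rr) ℂ) (hV : V0ᴴ * V0 = 1) (X : Matrix (Fin a) (Fin b) ℂ) :
    (X - fT P (V0 * V0ᴴ) X) * V0 = 0 := by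
  have hQV : (V0 * V0ᴴ) * V0 = V0 := by rw [Matrix.mul_assoc, hV, Matrix.mul_one]
  unfold fT
  rw [Matrix.sub_mul, Matrix.sub_mul, Matrix.add_mul]
  rw [Matrix.mul_assoc X (V0 * V0ᴴ) V0, hQV]
  rw [Matrix.mul_assoc (P * X) (V0 * V0ᴴ) V0, hQV]
  abel

lemma slice_projT (hΦ : Φ ∈ Matrix.unitaryGroup (Fin n3) ℂ) (U : Tensor n1 r n3)
    (V : Tensor n2 r n3) (X : Tensor n1 n2 n3) (t : Fin n3) :
    slice Φ (projT Φ U V X) t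
      = fT (slice Φ U t * (slice Φ U t)ᴴ) (slice Φ V t * (slice Φ V t)ᴴ) (slice Φ X t) := by
  show slice Φ (tprod Φ (tprod Φ U (tconj Φ U)) X + tprod Φ X (tprod Φ V (tconj Φ V))
    - tprod Φ (tprod Φ (tprod Φ U (tconj Φ U)) X) (tprod Φ V (tconj Φ V))) t = _
  simp only [slice_sub, slice_add, slice_tprod hΦ, slice_tconj hΦ]
  rfl

lemma slice_projTperp (hΦ : Φ ∈ Matrix.unitaryGroup (Fin n3) ℂ) (U : Tensor n1 r n3)
    (V : Tensor n2 r n3) (X : Tensor n1 n2 n3) (t : Fin n3) :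
    slice Φ (projTperp Φ U V X) t
      = slice Φ X t
        - fT (slice Φ U t * (slice Φ U t)ᴴ) (slice Φ V t * (slice Φ V t)ᴴ) (slice Φ X t) := by
  show slice Φ (X - projT Φ U V X) t = _
  rw [slice_sub, slice_projT hΦ]

lemma PH_herm {a rr : ℕ} (U0 : Matrix (Fin a) (Fin rr) ℂ) : (U0 * U0ᴴ)ᴴ = U0 * U0ᴴ := by
  rw [Matrix.conjTranspose_mul, Matrix.conjTranspose_conjTranspose]

lemma PH_idem {a rr : ℕ} (U0 : Matrix (Fin a) (Fin rr) ℂ) (hU : U0ᴴ * U0 = 1) :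
    (U0 * U0ᴴ) * (U0 * U0ᴴ) = U0 * U0ᴴ := by
  rw [m4, hU, Matrix.mul_one]

lemma projT_adj (hΦ : Φ ∈ Matrix.unitaryGroup (Fin n3) ℂ) (U : Tensor n1 r n3)
    (V : Tensor n2 r n3) (A B : Tensor n1 n2 n3) :
    tinner (projT Φ U V A) B = tinner A (projT Φ U V B) := by
  rw [tinner_slices hΦ, tinner_slices hΦ]
  refine Finset.sum_congr rfl fun t _ => ?_
  rw [slice_projT hΦ, slice_projT hΦ]
  exact fT_adj (PH_herm _) (PH_herm _) _ _

lemma projT_idem (hΦ : Φ ∈ Matrix.unitaryGroup (Fin n3) ℂ) {U : Tensor n1 r n3}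
    {V : Tensor n2 r n3} (hU : ∀ t, (slice Φ U t)ᴴ * slice Φ U t = 1)
    (hV : ∀ t, (slice Φ V t)ᴴ * slice Φ V t = 1) (A : Tensor n1 n2 n3) :
    projT Φ U V (projT Φ U V A) = projT Φ U V A := by
  refine tensor_ext_of_slices hΦ fun t => ?_
  rw [slice_projT hΦ, slice_projT hΦ]
  exact fT_idem (PH_idem _ (hU t)) (PH_idem _ (hV t)) _

lemma projT_sub (hΦ : Φ ∈ Matrix.unitaryGroup (Fin n3) ℂ) (U : Tensor n1 r n3)
    (V : Tensor n2 r n3) (A B : Tensor n1 n2 n3) :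
    projT Φ U V (A - B) = projT Φ U V A - projT Φ U V B := by
  refine tensor_ext_of_slices hΦ fun t => ?_
  rw [slice_projT hΦ, slice_sub, slice_sub, slice_projT hΦ, slice_projT hΦ]
  exact fT_sub _ _ _ _

lemma nuclearNormM_nonneg {a b : ℕ} (M : Matrix (Fin a) (Fin b) ℂ) : 0 ≤ nuclearNormM M :=
  Finset.sum_nonneg fun i _ => Real.sqrt_nonneg _

end ProjT
section FinalAux

open Tensor Matrix

variable {n1 n2 n3 r : ℕ} {Φ : Matrix (Fin n3) (Fin n3) ℂ}

lemma inner_UV {a b rr : ℕ} (U0 : Matrix (Fin a) (Fin rr) ℂ) (V0 : Matrix (Fin b) (Fin rr) ℂ)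
    (S0 : Matrix (Fin rr) (Fin rr) ℂ) (hU : U0ᴴ * U0 = 1) (hV : V0ᴴ * V0 = 1) :
    Mtinner (U0 * V0ᴴ) (U0 * S0 * V0ᴴ) = Matrix.trace S0 := by
  rw [Mtinner_eq_trace, Matrix.conjTranspose_mul, Matrix.conjTranspose_conjTranspose]
  have h1 : (V0 * U0ᴴ) * ((U0 * S0) * V0ᴴ) = V0 * (U0ᴴ * (U0 * S0)) * V0ᴴ := m4 _ _ _ _
  have h2 : U0ᴴ * (U0 * S0) = S0 := by rw [← Matrix.mul_assoc, hU, Matrix.one_mul]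
  rw [show (V0 * U0ᴴ) * (U0 * S0 * V0ᴴ) = (V0 * U0ᴴ) * ((U0 * S0) * V0ᴴ) from rfl, h1, h2]
  rw [Matrix.mul_assoc, Matrix.trace_mul_comm, Matrix.mul_assoc S0 V0ᴴ V0, hV, Matrix.mul_one]

lemma inner_zero {a b rr : ℕ} (A : Matrix (Fin a) (Fin b) ℂ) (U0 : Matrix (Fin a) (Fin rr) ℂ)
    (S0 : Matrix (Fin rr) (Fin rr) ℂ) (V0 : Matrix (Fin b) (Fin rr) ℂ)
    (h : Aᴴ * U0 = 0) : Mtinner A (U0 * S0 * V0ᴴ) = 0 := by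
  rw [Mtinner_eq_trace]
  have h1 : Aᴴ * (U0 * S0 * V0ᴴ) = ((Aᴴ * U0) * S0) * V0ᴴ := by
    rw [show U0 * S0 * V0ᴴ = (U0 * S0) * V0ᴴ from rfl, ← Matrix.mul_assoc, ← Matrix.mul_assoc]
  rw [h1, h, Matrix.zero_mul, Matrix.zero_mul, Matrix.trace_zero]

lemma slice_zero (t : Fin n3) : slice Φ (0 : Tensor n1 n2 n3) t = 0 := by
  ext i j
  show ∑ k, Φ t k * (0 : ℂ) = 0
  simp

lemma tinner_zero_left (C : Tensor n1 n2 n3) : tinner (0 : Tensor n1 n2 n3) C = 0 := by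
  unfold tinner
  simp [show ∀ (i : Fin n1) (j : Fin n2) (k : Fin n3), (0 : Tensor n1 n2 n3) i j k = 0
    from fun _ _ _ => rfl]

lemma tinner_sub_right (A B C : Tensor n1 n2 n3) :
    tinner A (B - C) = tinner A B - tinner A C := by
  unfold tinner
  rw [← Finset.sum_sub_distrib]
  refine Finset.sum_congr rfl fun i _ => ?_
  rw [← Finset.sum_sub_distrib]
  refine Finset.sum_congr rfl fun j _ => ?_
  rw [← Finset.sum_sub_distrib]
  refine Finset.sum_congr rfl fun k _ => ?_
  show (starRingEnd ℂ) (A i j k) * (B i j k - C i j k) = _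
  ring

end FinalAux
/-- uniqueness of the TTNN minimizer from a dual certificate. -/
theorem statement10 {n1 n2 n3 r : ℕ} (Φ : Matrix (Fin n3) (Fin n3) ℂ)
    (hΦ : Φ ∈ Matrix.unitaryGroup (Fin n3) ℂ)
    (Z : Tensor n1 n2 n3) (U : Tensor n1 r n3) (S : Tensor r r n3) (V : Tensor n2 r n3)
    (hSVD : SkinnySVD Φ Z r U S V)
    (Ω : Set (Fin n1 × Fin n2 × Fin n3))
    (hY : ∃ Y : Tensor n1 n2 n3, projOmega Ω Y = Y ∧
      frob (projT Φ U V Y - tprod Φ U (tconj Φ V)) ≤ 1 / (4 * (max n1 n2 : ℝ) * n3) ∧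
      specNorm Φ (projTperp Φ U V Y) ≤ 1 / 2)
    (hsep : ∀ W : Tensor n1 n2 n3, W ≠ 0 → projOmega Ω W = 0 →
      (1 / (4 * (max n1 n2 : ℝ) * n3)) * frob (projT Φ U V W)
        < (1 / 2) * ttnn Φ (projTperp Φ U V W)) :
    ∀ X : Tensor n1 n2 n3, projOmega Ω X = projOmega Ω Z → X ≠ Z →
      ttnn Φ Z < ttnn Φ X := by
  intro X hX hne
  obtain ⟨Y, hYΩ, hYT, hYspec⟩ := hY
  set W : Tensor n1 n2 n3 := X - Z with hWdef
  have hW0 : W ≠ 0 := sub_ne_zero.mpr hne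
  have hWΩ : projOmega Ω W = 0 := by
    funext i j k
    show Ω.indicator (fun p => W p.1 p.2.1 p.2.2) (i, j, k) = 0
    by_cases hp : (i, j, k) ∈ Ω
    · rw [Set.indicator_of_mem hp]
      have hXZ := congrFun (congrFun (congrFun hX i) j) k
      show X i j k - Z i j k = 0
      have h1 : Ω.indicator (fun p => X p.1 p.2.1 p.2.2) (i, j, k)
          = Ω.indicator (fun p => Z p.1 p.2.1 p.2.2) (i, j, k) := hXZ
      rw [Set.indicator_of_mem hp, Set.indicator_of_mem hp] at h1
      rw [h1, sub_self]
    · rw [Set.indicator_of_notMem hp]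
  have hsep' := hsep W hW0 hWΩ
  have hUo : ∀ t, (slice Φ U t)ᴴ * slice Φ U t = 1 := hSVD.U_orth
  have hVo : ∀ t, (slice Φ V t)ᴴ * slice Φ V t = 1 := hSVD.V_orth
  -- slices of Z
  have hZt : ∀ t, slice Φ Z t = slice Φ U t * slice Φ S t * (slice Φ V t)ᴴ := by
    intro t
    rw [hSVD.factor, slice_tprod hΦ, slice_tprod hΦ, slice_tconj hΦ]
  -- diagonal real structure of S
  set sig : Fin n3 → Fin r → ℝ := fun t i => (slice Φ S t i i).re with hsig
  have hsig0 : ∀ t i, 0 ≤ sig t i := fun t i => (hSVD.S_diag_real_nonneg t i).2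
  have hSt : ∀ t, slice Φ S t = Matrix.diagonal (fun i => ((sig t i : ℝ) : ℂ)) := by
    intro t
    ext i i'
    by_cases h : i = i'
    · subst h
      rw [Matrix.diagonal_apply_eq]
      apply Complex.ext
      · rw [Complex.ofReal_re]
      · rw [Complex.ofReal_im]
        exact ((hSVD.S_diag_real_nonneg t i).1).symm ▸ rfl
    · rw [Matrix.diagonal_apply_ne _ h]
      exact hSVD.S_offdiag t i i' h
  set trS : ℝ := ∑ t, ∑ i, sig t i with htrS
  -- column norms
  have hUcol : ∀ t j, vn (fun a => slice Φ U t a j) ≤ 1 := fun t j =>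
    vn_col_le_one _ (fun _ => (1:ℂ)) ((hUo t).trans Matrix.diagonal_one.symm)
      (fun _ => by norm_num) j
  have hVcol : ∀ t j, vn (fun a => slice Φ V t a j) ≤ 1 := fun t j =>
    vn_col_le_one _ (fun _ => (1:ℂ)) ((hVo t).trans Matrix.diagonal_one.symm)
      (fun _ => by norm_num) j
  -- Step A : ttnn Z ≤ trS
  have hZle : ttnn Φ Z ≤ trS := by
    rw [htrS]
    show ∑ t, nuclearNormM (slice Φ Z t) ≤ _
    refine Finset.sum_le_sum fun t _ => ?_
    have h1 : nuclearNormM (slice Φ Z t)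
        = (Mtinner (svdData (slice Φ Z t)).Q (slice Φ Z t)).re := by
      rw [(svdData (slice Φ Z t)).Q_inner, Complex.ofReal_re, (svdData (slice Φ Z t)).nuclear]
    rw [h1]
    have h2 := core (svdData (slice Φ Z t)).Q (slice Φ U t) (slice Φ V t) (sig t)
      (hsig0 t) (hUcol t) (hVcol t)
    rw [← hSt t, ← hZt t] at h2
    calc (Mtinner (svdData (slice Φ Z t)).Q (slice Φ Z t)).re
        ≤ specNormM (svdData (slice Φ Z t)).Q * ∑ i, sig t i := h2
      _ ≤ 1 * ∑ i, sig t i := by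
          refine mul_le_mul_of_nonneg_right (svdData (slice Φ Z t)).Q_spec ?_
          exact Finset.sum_nonneg fun i _ => hsig0 t i
      _ = ∑ i, sig t i := one_mul _
  -- perp-slice kernel facts
  have hUtM : ∀ t, (slice Φ U t)ᴴ * slice Φ (projTperp Φ U V W) t = 0 := by
    intro t
    rw [slice_projTperp hΦ]
    exact fT_perp_left _ _ (hUo t) _
  have hMtV : ∀ t, slice Φ (projTperp Φ U V W) t * slice Φ V t = 0 := by
    intro t
    rw [slice_projTperp hΦ]
    exact fT_perp_right _ _ (hVo t) _
  -- certificate tensor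
  set QT : Tensor n1 n2 n3 :=
    unslice Φ (fun t => (svdData (slice Φ (projTperp Φ U V W) t)).Q) with hQT
  set D0 : Tensor n1 n2 n3 := tprod Φ U (tconj Φ V) with hD0
  set G : Tensor n1 n2 n3 := D0 + QT with hG
  have hQTslice : ∀ t, slice Φ QT t = (svdData (slice Φ (projTperp Φ U V W) t)).Q := by
    intro t
    rw [hQT, slice_unslice hΦ]
  have hD0slice : ∀ t, slice Φ D0 t = slice Φ U t * (slice Φ V t)ᴴ := by
    intro t
    rw [hD0, slice_tprod hΦ, slice_tconj hΦ]
  have hGslice : ∀ t, slice Φ G t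
      = slice Φ U t * (slice Φ V t)ᴴ + (svdData (slice Φ (projTperp Φ U V W) t)).Q := by
    intro t
    rw [hG, slice_add, hQTslice, hD0slice]
  have hGspec : ∀ t, specNormM (slice Φ G t) ≤ 1 := by
    intro t
    rw [hGslice t]
    exact (svdData (slice Φ (projTperp Φ U V W) t)).G_spec _ _ (hUo t) (hVo t) (hUtM t) (hMtV t)
  -- Step C
  have hXge : ∑ t, (Mtinner (slice Φ G t) (slice Φ X t)).re ≤ ttnn Φ X := by
    show _ ≤ ∑ t, nuclearNormM (slice Φ X t)
    refine Finset.sum_le_sum fun t _ => ?_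
    calc (Mtinner (slice Φ G t) (slice Φ X t)).re
        ≤ specNormM (slice Φ G t) * nuclearNormM (slice Φ X t) :=
          Mtinner_le_spec_nuclear _ _
      _ ≤ 1 * nuclearNormM (slice Φ X t) :=
          mul_le_mul_of_nonneg_right (hGspec t) (nuclearNormM_nonneg _)
      _ = nuclearNormM (slice Φ X t) := one_mul _
  -- Step B
  have hGZ : ∑ t, (Mtinner (slice Φ G t) (slice Φ Z t)).re = trS := by
    rw [htrS]
    refine Finset.sum_congr rfl fun t _ => ?_
    have hQU : (slice Φ U t)ᴴ * (svdData (slice Φ (projTperp Φ U V W) t)).Q = 0 :=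
      (svdData (slice Φ (projTperp Φ U V W) t)).Q_left _ (hUtM t)
    have hQHU : ((svdData (slice Φ (projTperp Φ U V W) t)).Q)ᴴ * slice Φ U t = 0 := by
      have h := congrArg Matrix.conjTranspose hQU
      rwa [Matrix.conjTranspose_mul, Matrix.conjTranspose_conjTranspose,
        Matrix.conjTranspose_zero] at h
    rw [hGslice t, Mtinner_add_left, hZt t]
    rw [inner_UV _ _ _ (hUo t) (hVo t), inner_zero _ _ _ _ hQHU, add_zero]
    rw [hSt t, Matrix.trace_diagonal, ← Complex.ofReal_sum, Complex.ofReal_re]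
  -- Step D/E : tinner G W
  have hGW : (tinner G W).re
      = (∑ t, (Mtinner (slice Φ G t) (slice Φ X t)).re)
        - ∑ t, (Mtinner (slice Φ G t) (slice Φ Z t)).re := by
    rw [tinner_slices hΦ, Complex.re_sum, ← Finset.sum_sub_distrib]
    refine Finset.sum_congr rfl fun t _ => ?_
    rw [hWdef, slice_sub, Mtinner_sub_right, Complex.sub_re]
  -- orthogonality with Y
  have hYW : tinner Y W = 0 := by
    unfold tinner
    refine Finset.sum_eq_zero fun i _ => Finset.sum_eq_zero fun j _ =>
      Finset.sum_eq_zero fun k _ => ?_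
    by_cases hp : (i, j, k) ∈ Ω
    · have h1 := congrFun (congrFun (congrFun hWΩ i) j) k
      show (starRingEnd ℂ) (Y i j k) * W i j k = 0
      have h2 : Ω.indicator (fun p => W p.1 p.2.1 p.2.2) (i, j, k) = 0 := h1
      rw [Set.indicator_of_mem hp] at h2
      rw [h2, mul_zero]
    · have h1 := congrFun (congrFun (congrFun hYΩ i) j) k
      have h2 : Ω.indicator (fun p => Y p.1 p.2.1 p.2.2) (i, j, k) = Y i j k := h1
      rw [Set.indicator_of_notMem hp] at h2
      show (starRingEnd ℂ) (Y i j k) * W i j k = 0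
      rw [← h2, map_zero, zero_mul]
  -- projection structure facts
  have hprojD0 : projT Φ U V D0 = D0 := by
    refine tensor_ext_of_slices hΦ fun t => ?_
    rw [slice_projT hΦ, hD0slice t]
    refine fT_fix_left ?_
    rw [m4, hUo t, Matrix.mul_one]
  have hprojQT : projT Φ U V QT = 0 := by
    refine tensor_ext_of_slices hΦ fun t => ?_
    rw [slice_projT hΦ, hQTslice t, slice_zero]
    refine fT_kill ?_ ?_
    · rw [Matrix.mul_assoc, (svdData (slice Φ (projTperp Φ U V W) t)).Q_left _ (hUtM t),
        Matrix.mul_zero]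
    · rw [← Matrix.mul_assoc, (svdData (slice Φ (projTperp Φ U V W) t)).Q_right _ (hMtV t),
        Matrix.zero_mul]
  have hidem := projT_idem hΦ hUo hVo
  -- term 1
  set A1 : Tensor n1 n2 n3 := D0 - projT Φ U V Y with hA1
  have hA1fix : projT Φ U V A1 = A1 := by
    rw [hA1, projT_sub hΦ, hprojD0, hidem]
  have hT1 : tinner A1 W = tinner A1 (projT Φ U V W) := by
    conv_lhs => rw [← hA1fix]
    rw [projT_adj hΦ]
  have hT1b : -(1 / (4 * (max n1 n2 : ℝ) * n3) * frob (projT Φ U V W))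
      ≤ (tinner A1 W).re := by
    rw [hT1]
    have habs := abs_tinner_le A1 (projT Φ U V W)
    have h2 : frob A1 ≤ 1 / (4 * (max n1 n2 : ℝ) * n3) := by
      rw [hA1, frob_sub_comm]
      exact hYT
    have h3 : ‖tinner A1 (projT Φ U V W)‖
        ≤ 1 / (4 * (max n1 n2 : ℝ) * n3) * frob (projT Φ U V W) :=
      le_trans habs (mul_le_mul_of_nonneg_right h2 (frob_nonneg _))
    have h4 := Complex.abs_re_le_norm (tinner A1 (projT Φ U V W))
    have h5 := neg_abs_le ((tinner A1 (projT Φ U V W)).re)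
    linarith
  -- term 2
  set A2 : Tensor n1 n2 n3 := QT - projTperp Φ U V Y with hA2
  have hperpY : projT Φ U V (projTperp Φ U V Y) = 0 := by
    show projT Φ U V (Y - projT Φ U V Y) = 0
    rw [projT_sub hΦ, hidem, sub_self]
  have hprojA2 : projT Φ U V A2 = 0 := by
    rw [hA2, projT_sub hΦ, hprojQT, hperpY, sub_self]
  have hT2 : tinner A2 W = tinner A2 (projTperp Φ U V W) := by
    have h5 : tinner A2 (projT Φ U V W) = 0 := by
      rw [← projT_adj hΦ, hprojA2, tinner_zero_left]
    show tinner A2 W = tinner A2 (W - projT Φ U V W)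
    conv_rhs => rw [tinner_sub_right]
    rw [h5, sub_zero]
  have hQTinner : (tinner QT (projTperp Φ U V W)).re = ttnn Φ (projTperp Φ U V W) := by
    rw [tinner_slices hΦ, Complex.re_sum]
    show _ = ∑ t, nuclearNormM (slice Φ (projTperp Φ U V W) t)
    refine Finset.sum_congr rfl fun t _ => ?_
    rw [hQTslice t, (svdData (slice Φ (projTperp Φ U V W) t)).Q_inner, Complex.ofReal_re,
      (svdData (slice Φ (projTperp Φ U V W) t)).nuclear]
  have hPYinner : (tinner (projTperp Φ U V Y) (projTperp Φ U V W)).re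
      ≤ (1 / 2) * ttnn Φ (projTperp Φ U V W) := by
    rw [tinner_slices hΦ, Complex.re_sum]
    have hspec_t : ∀ t, specNormM (slice Φ (projTperp Φ U V Y) t) ≤ 1 / 2 := by
      intro t
      refine le_trans ?_ hYspec
      show specNormM (slice Φ (projTperp Φ U V Y) t)
        ≤ ⨆ s, specNormM (slice Φ (projTperp Φ U V Y) s)
      exact le_ciSup (f := fun s => specNormM (slice Φ (projTperp Φ U V Y) s))
        (Set.finite_range _).bddAbove t
    calc ∑ t, (Mtinner (slice Φ (projTperp Φ U V Y) t) (slice Φ (projTperp Φ U V W) t)).re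
        ≤ ∑ t, (1 / 2) * nuclearNormM (slice Φ (projTperp Φ U V W) t) := by
          refine Finset.sum_le_sum fun t _ => ?_
          calc (Mtinner (slice Φ (projTperp Φ U V Y) t) (slice Φ (projTperp Φ U V W) t)).re
              ≤ specNormM (slice Φ (projTperp Φ U V Y) t)
                * nuclearNormM (slice Φ (projTperp Φ U V W) t) :=
                Mtinner_le_spec_nuclear _ _
            _ ≤ (1 / 2) * nuclearNormM (slice Φ (projTperp Φ U V W) t) :=
                mul_le_mul_of_nonneg_right (hspec_t t) (nuclearNormM_nonneg _)
      _ = (1 / 2) * ttnn Φ (projTperp Φ U V W) := by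
          rw [← Finset.mul_sum]
          rfl
  have hA2re : (1 / 2) * ttnn Φ (projTperp Φ U V W) ≤ (tinner A2 W).re := by
    rw [hT2, hA2, tinner_sub_left, Complex.sub_re, hQTinner]
    linarith [hPYinner]
  -- combine
  have hGdecomp : G = A1 + A2 + Y := by
    rw [hG, hA1, hA2]
    show D0 + QT = (D0 - projT Φ U V Y) + (QT - (Y - projT Φ U V Y)) + Y
    abel
  have hsplit : (tinner G W).re = (tinner A1 W).re + (tinner A2 W).re := by
    rw [hGdecomp, tinner_add_left, tinner_add_left, hYW, add_zero, Complex.add_re]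
  have hfinal : 0 < (tinner G W).re := by
    rw [hsplit]
    have := hsep'
    linarith [hT1b, hA2re]
  linarith [hfinal, hGW, hGZ, hXge, hZle]
end
end

section
/- Let Z ∈ ℂ^{n1×n2×n3} admit a skinny transformed tensor SVD Z = U ⋄ S ⋄ Vᴴ with transformed multi-rank (r_1,…,r_{n3}) satisfying Σ_t r_t ≥ 1 and the tensor incoherence conditions with parameter μ ≥ 1, and let T be the subspace determined by U and V. Let ρ ∈ (0,1], fix (i,j,k), and for δ ∈ {0,1} define the linear map T^{ijk}_δ on ℂ^{n1×n2×n3} by T^{ijk}_δ(X) = ρ^{−1} δ ⟨P_T(E_ijk), X⟩ P_T(E_ijk). Then ‖T^{ijk}_δ − (1/(n1 n2 n3)) P_T‖_op ≤ 2μ(Σ_{t=1}^{n3} r_t)/(n_(2) n_3 ρ). -/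
open scoped BigOperators ComplexConjugate
open MeasureTheory Matrix

noncomputable section

open Tensor



namespace Statement13Aux

open Tensor Complex

variable {n1 n2 n3 n4 r a b c : ℕ}

/-- Matrix Frobenius inner product. -/
def minner {a b : ℕ} (M N : Matrix (Fin a) (Fin b) ℂ) : ℂ :=
  ∑ i, ∑ j, (starRingEnd ℂ) (M i j) * N i j

/-- Matrix Frobenius norm squared. -/
def msq {a b : ℕ} (M : Matrix (Fin a) (Fin b) ℂ) : ℝ :=
  ∑ i, ∑ j, Complex.normSq (M i j)

lemma msq_nonneg (M : Matrix (Fin a) (Fin b) ℂ) : 0 ≤ msq M :=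
  Finset.sum_nonneg fun _ _ => Finset.sum_nonneg fun _ _ => Complex.normSq_nonneg _

lemma minner_self (M : Matrix (Fin a) (Fin b) ℂ) : minner M M = (msq M : ℂ) := by
  simp only [minner, msq]
  push_cast
  refine Finset.sum_congr rfl fun i _ => Finset.sum_congr rfl fun j _ => ?_
  rw [Complex.normSq_eq_conj_mul_self]

lemma minner_eq_trace (M N : Matrix (Fin a) (Fin b) ℂ) :
    minner M N = Matrix.trace (Mᴴ * N) := by
  simp only [minner, Matrix.trace, Matrix.diag, Matrix.mul_apply,
    Matrix.conjTranspose_apply, Complex.star_def]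
  exact Finset.sum_comm

lemma minner_add_left (M M' N : Matrix (Fin a) (Fin b) ℂ) :
    minner (M + M') N = minner M N + minner M' N := by
  simp [minner, add_mul, Finset.sum_add_distrib]

lemma minner_sub_left (M M' N : Matrix (Fin a) (Fin b) ℂ) :
    minner (M - M') N = minner M N - minner M' N := by
  simp [minner, sub_mul, Finset.sum_sub_distrib]

lemma minner_add_right (M N N' : Matrix (Fin a) (Fin b) ℂ) :
    minner M (N + N') = minner M N + minner M N' := by
  simp [minner, mul_add, Finset.sum_add_distrib]

lemma minner_sub_right (M N N' : Matrix (Fin a) (Fin b) ℂ) :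
    minner M (N - N') = minner M N - minner M N' := by
  simp [minner, mul_sub, Finset.sum_sub_distrib]

lemma minner_mul_left (P : Matrix (Fin c) (Fin a) ℂ) (M : Matrix (Fin a) (Fin b) ℂ)
    (N : Matrix (Fin c) (Fin b) ℂ) : minner (P * M) N = minner M (Pᴴ * N) := by
  rw [minner_eq_trace, minner_eq_trace, Matrix.conjTranspose_mul, Matrix.mul_assoc]

lemma minner_mul_right (P : Matrix (Fin b) (Fin c) ℂ) (M : Matrix (Fin a) (Fin b) ℂ)
    (N : Matrix (Fin a) (Fin c) ℂ) : minner (M * P) N = minner M (N * Pᴴ) := by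
  rw [minner_eq_trace, minner_eq_trace, Matrix.conjTranspose_mul,
    Matrix.mul_assoc, Matrix.trace_mul_comm, Matrix.mul_assoc]

lemma msq_lmul_iso {W : Matrix (Fin c) (Fin a) ℂ} (h : Wᴴ * W = 1)
    (M : Matrix (Fin a) (Fin b) ℂ) : msq (W * M) = msq M := by
  have h2 := minner_mul_left W M (W * M)
  rw [← Matrix.mul_assoc, h, Matrix.one_mul, minner_self, minner_self] at h2
  exact_mod_cast h2

lemma msq_rmul_iso {W : Matrix (Fin b) (Fin c) ℂ} (h : W * Wᴴ = 1)
    (M : Matrix (Fin a) (Fin b) ℂ) : msq (M * W) = msq M := by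
  have h2 := minner_mul_right W M (M * W)
  rw [Matrix.mul_assoc, h, Matrix.mul_one, minner_self, minner_self] at h2
  exact_mod_cast h2

/-- Slice-level projection. -/
def Qmap {a b : ℕ} (Pu : Matrix (Fin a) (Fin a) ℂ) (Pv : Matrix (Fin b) (Fin b) ℂ)
    (M : Matrix (Fin a) (Fin b) ℂ) : Matrix (Fin a) (Fin b) ℂ :=
  Pu * M + M * Pv - Pu * M * Pv

lemma Qmap_adjoint {Pu : Matrix (Fin a) (Fin a) ℂ} {Pv : Matrix (Fin b) (Fin b) ℂ}
    (hu : Puᴴ = Pu) (hv : Pvᴴ = Pv) (M N : Matrix (Fin a) (Fin b) ℂ) :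
    minner (Qmap Pu Pv M) N = minner M (Qmap Pu Pv N) := by
  have e1 : minner (Pu * M) N = minner M (Pu * N) := by rw [minner_mul_left, hu]
  have e2 : minner (M * Pv) N = minner M (N * Pv) := by rw [minner_mul_right, hv]
  have e3 : minner (Pu * M * Pv) N = minner M (Pu * N * Pv) := by
    rw [minner_mul_right, hv, minner_mul_left, hu, Matrix.mul_assoc]
  simp only [Qmap, minner_sub_left, minner_add_left, minner_sub_right, minner_add_right,
    e1, e2, e3]

lemma Qmap_idem {Pu : Matrix (Fin a) (Fin a) ℂ} {Pv : Matrix (Fin b) (Fin b) ℂ}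
    (hu2 : Pu * Pu = Pu) (hv2 : Pv * Pv = Pv) (M : Matrix (Fin a) (Fin b) ℂ) :
    Qmap Pu Pv (Qmap Pu Pv M) = Qmap Pu Pv M := by
  have h1 : Pu * Qmap Pu Pv M = Pu * M := by
    rw [Qmap]
    simp only [Matrix.mul_add, Matrix.mul_sub, ← Matrix.mul_assoc, hu2]
    abel
  have h2 : Qmap Pu Pv M * Pv = M * Pv := by
    rw [Qmap]
    simp only [Matrix.add_mul, Matrix.sub_mul, Matrix.mul_assoc, hv2]
    abel
  rw [Qmap, h1, h2]
  rfl

section SliceLemmas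

variable (Φ : Matrix (Fin n3) (Fin n3) ℂ)

lemma slice_add (A B : Tensor n1 n2 n3) (t : Fin n3) :
    Tensor.slice Φ (A + B) t = Tensor.slice Φ A t + Tensor.slice Φ B t := by
  ext x y
  simp [Tensor.slice, mul_add, Finset.sum_add_distrib]

lemma slice_sub (A B : Tensor n1 n2 n3) (t : Fin n3) :
    Tensor.slice Φ (A - B) t = Tensor.slice Φ A t - Tensor.slice Φ B t := by
  ext x y
  simp [Tensor.slice, mul_sub, Finset.sum_sub_distrib]

lemma slice_unslice (hΦ : Φ ∈ Matrix.unitaryGroup (Fin n3) ℂ)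
    (M : Fin n3 → Matrix (Fin n1) (Fin n2) ℂ) (t : Fin n3) :
    Tensor.slice Φ (Tensor.unslice Φ M) t = M t := by
  have h : Φ * Φᴴ = 1 := by
    have := (Matrix.mem_unitaryGroup_iff.mp hΦ)
    simpa [Matrix.star_eq_conjTranspose] using this
  ext x y
  simp only [Tensor.slice, Tensor.unslice, Matrix.of_apply, Finset.mul_sum]
  rw [Finset.sum_comm]
  have key : ∀ s, (∑ k, Φ t k * ((starRingEnd ℂ) (Φ s k) * M s x y))
      = (Φ * Φᴴ) t s * M s x y := by
    intro s
    rw [Matrix.mul_apply, Finset.sum_mul]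
    refine Finset.sum_congr rfl fun k _ => ?_
    simp only [Matrix.conjTranspose_apply, Complex.star_def]
    ring
  simp_rw [key, h, Matrix.one_apply, ite_mul, one_mul, zero_mul]
  simp

lemma slice_tprod (hΦ : Φ ∈ Matrix.unitaryGroup (Fin n3) ℂ) (A : Tensor n1 n2 n3)
    (B : Tensor n2 n4 n3) (t : Fin n3) :
    Tensor.slice Φ (Tensor.tprod Φ A B) t = Tensor.slice Φ A t * Tensor.slice Φ B t := by
  rw [Tensor.tprod, slice_unslice Φ hΦ]

lemma slice_tconj (hΦ : Φ ∈ Matrix.unitaryGroup (Fin n3) ℂ) (A : Tensor n1 n2 n3)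
    (t : Fin n3) : Tensor.slice Φ (Tensor.tconj Φ A) t = (Tensor.slice Φ A t)ᴴ := by
  rw [Tensor.tconj, slice_unslice Φ hΦ]

lemma parseval_vec (hΦ : Φ ∈ Matrix.unitaryGroup (Fin n3) ℂ) (x y : Fin n3 → ℂ) :
    ∑ t, (starRingEnd ℂ) (∑ k, Φ t k * x k) * (∑ l, Φ t l * y l)
      = ∑ k, (starRingEnd ℂ) (x k) * y k := by
  have h : Φᴴ * Φ = 1 := by
    have := (Matrix.mem_unitaryGroup_iff'.mp hΦ)
    simpa [Matrix.star_eq_conjTranspose] using this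
  have key : minner (Φ * Matrix.replicateCol (Fin 1) x) (Φ * Matrix.replicateCol (Fin 1) y)
      = minner (Matrix.replicateCol (Fin 1) x) (Matrix.replicateCol (Fin 1) y) := by
    rw [minner_mul_left, ← Matrix.mul_assoc, h, Matrix.one_mul]
  simpa [minner, Matrix.mul_apply, Matrix.replicateCol_apply] using key

lemma tinner_slices (hΦ : Φ ∈ Matrix.unitaryGroup (Fin n3) ℂ) (A B : Tensor n1 n2 n3) :
    Tensor.tinner A B = ∑ t, minner (Tensor.slice Φ A t) (Tensor.slice Φ B t) := by
  unfold minner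
  simp only [Tensor.slice, Matrix.of_apply]
  have h1 : (∑ t, ∑ x, ∑ y, (starRingEnd ℂ) (∑ k, Φ t k * A x y k) * (∑ l, Φ t l * B x y l))
      = ∑ x, ∑ t, ∑ y, (starRingEnd ℂ) (∑ k, Φ t k * A x y k) * (∑ l, Φ t l * B x y l) :=
    Finset.sum_comm
  rw [h1]
  unfold Tensor.tinner
  refine Finset.sum_congr rfl fun x _ => ?_
  have h2 : (∑ t, ∑ y, (starRingEnd ℂ) (∑ k, Φ t k * A x y k) * (∑ l, Φ t l * B x y l))
      = ∑ y, ∑ t, (starRingEnd ℂ) (∑ k, Φ t k * A x y k) * (∑ l, Φ t l * B x y l) :=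
    Finset.sum_comm
  rw [h2]
  refine Finset.sum_congr rfl fun y _ => (parseval_vec Φ hΦ _ _).symm

lemma tinner_self_eq (A : Tensor n1 n2 n3) :
    Tensor.tinner A A = ((Tensor.frob A ^ 2 : ℝ) : ℂ) := by
  have hnn : (0:ℝ) ≤ ∑ x, ∑ y, ∑ k, Complex.normSq (A x y k) :=
    Finset.sum_nonneg fun _ _ => Finset.sum_nonneg fun _ _ =>
      Finset.sum_nonneg fun _ _ => Complex.normSq_nonneg _
  rw [Tensor.frob, Real.sq_sqrt hnn]
  unfold Tensor.tinner
  push_cast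
  refine Finset.sum_congr rfl fun x _ => Finset.sum_congr rfl fun y _ =>
    Finset.sum_congr rfl fun k _ => ?_
  rw [Complex.normSq_eq_conj_mul_self]

lemma frob_sq_slices (hΦ : Φ ∈ Matrix.unitaryGroup (Fin n3) ℂ) (A : Tensor n1 n2 n3) :
    Tensor.frob A ^ 2 = ∑ t, msq (Tensor.slice Φ A t) := by
  have h := tinner_slices Φ hΦ A A
  rw [tinner_self_eq] at h
  simp_rw [minner_self] at h
  exact_mod_cast h

end SliceLemmas

lemma frob_nonneg (A : Tensor n1 n2 n3) : 0 ≤ Tensor.frob A := Real.sqrt_nonneg _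

lemma frob_sq_re (A : Tensor n1 n2 n3) : Tensor.frob A ^ 2 = (Tensor.tinner A A).re := by
  rw [tinner_self_eq]
  exact (Complex.ofReal_re _).symm

lemma tinner_conj (A B : Tensor n1 n2 n3) :
    (starRingEnd ℂ) (Tensor.tinner A B) = Tensor.tinner B A := by
  simp only [Tensor.tinner, map_sum, _root_.map_mul, Complex.conj_conj]
  exact Finset.sum_congr rfl fun i _ => Finset.sum_congr rfl fun j _ =>
    Finset.sum_congr rfl fun k _ => mul_comm _ _

lemma tinner_sub_left (A B C : Tensor n1 n2 n3) :
    Tensor.tinner (A - B) C = Tensor.tinner A C - Tensor.tinner B C := by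
  simp [Tensor.tinner, sub_mul, Finset.sum_sub_distrib]

lemma tinner_sub_right (A B C : Tensor n1 n2 n3) :
    Tensor.tinner A (B - C) = Tensor.tinner A B - Tensor.tinner A C := by
  simp [Tensor.tinner, mul_sub, Finset.sum_sub_distrib]

lemma tinner_smul_left (z : ℂ) (A B : Tensor n1 n2 n3) :
    Tensor.tinner (z • A) B = (starRingEnd ℂ) z * Tensor.tinner A B := by
  simp only [Tensor.tinner, Pi.smul_apply, smul_eq_mul, _root_.map_mul, Finset.mul_sum]
  exact Finset.sum_congr rfl fun i _ => Finset.sum_congr rfl fun j _ =>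
    Finset.sum_congr rfl fun k _ => by ring

lemma tinner_smul_right (z : ℂ) (A B : Tensor n1 n2 n3) :
    Tensor.tinner A (z • B) = z * Tensor.tinner A B := by
  simp only [Tensor.tinner, Pi.smul_apply, smul_eq_mul, Finset.mul_sum]
  exact Finset.sum_congr rfl fun i _ => Finset.sum_congr rfl fun j _ =>
    Finset.sum_congr rfl fun k _ => by ring

lemma rsmul_eq (rr : ℝ) (A : Tensor n1 n2 n3) : rr • A = ((rr : ℂ)) • A := by
  funext x y z
  simp [Pi.smul_apply, Complex.real_smul]

lemma abs_tinner_le (A B : Tensor n1 n2 n3) :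
    ‖Tensor.tinner A B‖ ≤ Tensor.frob A * Tensor.frob B := by
  let f : Tensor n1 n2 n3 → EuclideanSpace ℂ (Fin n1 × Fin n2 × Fin n3) :=
    fun A => WithLp.toLp 2 (fun p : Fin n1 × Fin n2 × Fin n3 => A p.1 p.2.1 p.2.2)
  have hinner : ∀ A B : Tensor n1 n2 n3, (inner ℂ (f A) (f B) : ℂ) = Tensor.tinner A B := by
    intro A B
    simp only [PiLp.inner_apply, RCLike.inner_apply', Tensor.tinner, f, PiLp.toLp_apply]
    rw [Fintype.sum_prod_type]
    exact Finset.sum_congr rfl fun x _ => Fintype.sum_prod_type _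
  have hnorm : ∀ A : Tensor n1 n2 n3, ‖f A‖ = Tensor.frob A := by
    intro A
    rw [EuclideanSpace.norm_eq, Tensor.frob]
    congr 1
    rw [Fintype.sum_prod_type]
    refine Finset.sum_congr rfl fun x _ => ?_
    rw [Fintype.sum_prod_type]
    refine Finset.sum_congr rfl fun y _ => Finset.sum_congr rfl fun k _ => ?_
    rw [← Complex.sq_norm]
  calc ‖Tensor.tinner A B‖ = ‖(inner ℂ (f A) (f B) : ℂ)‖ := by
        rw [hinner]
    _ ≤ ‖f A‖ * ‖f B‖ := norm_inner_le_norm _ _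
    _ = Tensor.frob A * Tensor.frob B := by rw [hnorm, hnorm]


section ProjTLemmas

variable (Φ : Matrix (Fin n3) (Fin n3) ℂ)

lemma slice_projT (hΦ : Φ ∈ Matrix.unitaryGroup (Fin n3) ℂ) (U : Tensor n1 r n3)
    (V : Tensor n2 r n3) (X : Tensor n1 n2 n3) (t : Fin n3) :
    Tensor.slice Φ (Tensor.projT Φ U V X) t
      = Qmap (Tensor.slice Φ U t * (Tensor.slice Φ U t)ᴴ)
          (Tensor.slice Φ V t * (Tensor.slice Φ V t)ᴴ) (Tensor.slice Φ X t) := by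
  unfold Tensor.projT Qmap
  simp only [slice_sub Φ, slice_add Φ, slice_tprod Φ hΦ, slice_tconj Φ hΦ]

lemma Pu_herm (U : Tensor n1 r n3) (t : Fin n3) :
    (Tensor.slice Φ U t * (Tensor.slice Φ U t)ᴴ)ᴴ
      = Tensor.slice Φ U t * (Tensor.slice Φ U t)ᴴ := by
  rw [Matrix.conjTranspose_mul, Matrix.conjTranspose_conjTranspose]

lemma Pu_idem (U : Tensor n1 r n3) (t : Fin n3)
    (hU : (Tensor.slice Φ U t)ᴴ * Tensor.slice Φ U t = 1) :
    (Tensor.slice Φ U t * (Tensor.slice Φ U t)ᴴ) * (Tensor.slice Φ U t * (Tensor.slice Φ U t)ᴴ)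
      = Tensor.slice Φ U t * (Tensor.slice Φ U t)ᴴ := by
  simp only [Matrix.mul_assoc]
  rw [← Matrix.mul_assoc ((Tensor.slice Φ U t)ᴴ), hU, Matrix.one_mul]

lemma tinner_projT_reproduce (hΦ : Φ ∈ Matrix.unitaryGroup (Fin n3) ℂ)
    (U : Tensor n1 r n3) (V : Tensor n2 r n3)
    (hU : ∀ t, (Tensor.slice Φ U t)ᴴ * Tensor.slice Φ U t = 1)
    (hV : ∀ t, (Tensor.slice Φ V t)ᴴ * Tensor.slice Φ V t = 1)
    (A X : Tensor n1 n2 n3) :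
    Tensor.tinner (Tensor.projT Φ U V A) (Tensor.projT Φ U V X)
      = Tensor.tinner (Tensor.projT Φ U V A) X := by
  rw [tinner_slices Φ hΦ, tinner_slices Φ hΦ]
  refine Finset.sum_congr rfl fun t _ => ?_
  simp only [slice_projT Φ hΦ]
  rw [← Qmap_adjoint (Pu_herm Φ U t) (Pu_herm Φ V t),
    Qmap_idem (Pu_idem Φ U t (hU t)) (Pu_idem Φ V t (hV t))]

/-- Bound `Re⟨Q M, M⟩ ≤ ‖Uᴴ M‖² + ‖M V‖²`. -/
lemma re_minner_Qmap_le {Ut : Matrix (Fin n1) (Fin r) ℂ} {Vt : Matrix (Fin n2) (Fin r) ℂ}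
    (M : Matrix (Fin n1) (Fin n2) ℂ) :
    (minner (Qmap (Ut * Utᴴ) (Vt * Vtᴴ) M) M).re ≤ msq (Utᴴ * M) + msq (M * Vt) := by
  have e1 : minner ((Ut * Utᴴ) * M) M = (msq (Utᴴ * M) : ℂ) := by
    rw [Matrix.mul_assoc, minner_mul_left, minner_self]
  have e2 : minner (M * (Vt * Vtᴴ)) M = (msq (M * Vt) : ℂ) := by
    rw [← Matrix.mul_assoc, minner_mul_right, Matrix.conjTranspose_conjTranspose, minner_self]
  have e3 : minner ((Ut * Utᴴ) * M * (Vt * Vtᴴ)) M = (msq (Utᴴ * M * Vt) : ℂ) := by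
    have h : (Ut * Utᴴ) * M * (Vt * Vtᴴ) = Ut * ((Utᴴ * M * Vt) * Vtᴴ) := by
      simp only [Matrix.mul_assoc]
    rw [h, minner_mul_left, minner_mul_right, Matrix.conjTranspose_conjTranspose, minner_self]
  rw [Qmap, minner_sub_left, minner_add_left, e1, e2, e3]
  push_cast
  simp only [Complex.add_re, Complex.sub_re, Complex.ofReal_re]
  have := msq_nonneg (Utᴴ * M * Vt)
  linarith

end ProjTLemmas

section EntryLemmas

variable (Φ : Matrix (Fin n3) (Fin n3) ℂ) (i : Fin n1) (j : Fin n2) (k : Fin n3)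

lemma slice_unitTensor_apply (t : Fin n3) (x : Fin n1) (y : Fin n2) :
    Tensor.slice Φ (Tensor.unitTensor i j k : Tensor n1 n2 n3) t x y
      = if x = i ∧ y = j then Φ t k else 0 := by
  simp only [Tensor.slice, Matrix.of_apply, Tensor.unitTensor]
  by_cases h : x = i ∧ y = j
  · obtain ⟨h1, h2⟩ := h
    subst h1; subst h2
    simp
  · have hall : ∀ c : Fin n3, ¬(x = i ∧ y = j ∧ c = k) := fun c hc => h ⟨hc.1, hc.2.1⟩
    simp [hall, h]

lemma slice_colBasis_apply {n : ℕ} (ii : Fin n) (t : Fin n3) (x : Fin n) (y : Fin 1) :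
    Tensor.slice Φ (Tensor.colBasis ii k : Tensor n 1 n3) t x y
      = if x = ii then Φ t k else 0 := by
  simp only [Tensor.slice, Matrix.of_apply, Tensor.colBasis]
  by_cases h : x = ii
  · subst h; simp
  · simp [h]

lemma msq_UE (U : Tensor n1 r n3) (t : Fin n3) :
    msq ((Tensor.slice Φ U t)ᴴ * Tensor.slice Φ (Tensor.unitTensor i j k) t)
      = msq ((Tensor.slice Φ U t)ᴴ * Tensor.slice Φ (Tensor.colBasis i k) t) := by
  have hE : ∀ (s : Fin r) (y : Fin n2),
      ((Tensor.slice Φ U t)ᴴ * Tensor.slice Φ (Tensor.unitTensor i j k) t) s y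
        = if y = j then (starRingEnd ℂ) (Tensor.slice Φ U t i s) * Φ t k else 0 := by
    intro s y
    rw [Matrix.mul_apply]
    simp only [Matrix.conjTranspose_apply, Complex.star_def, slice_unitTensor_apply]
    by_cases hy : y = j
    · subst hy
      simp
    · simp [hy]
  have hC : ∀ (s : Fin r) (y : Fin 1),
      ((Tensor.slice Φ U t)ᴴ * Tensor.slice Φ (Tensor.colBasis i k) t) s y
        = (starRingEnd ℂ) (Tensor.slice Φ U t i s) * Φ t k := by
    intro s y
    rw [Matrix.mul_apply]
    simp only [Matrix.conjTranspose_apply, Complex.star_def, slice_colBasis_apply]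
    simp
  unfold msq
  simp_rw [hE, hC]
  refine Finset.sum_congr rfl fun s _ => ?_
  simp [apply_ite Complex.normSq, Finset.sum_ite_eq']

lemma msq_EV (V : Tensor n2 r n3) (t : Fin n3) :
    msq (Tensor.slice Φ (Tensor.unitTensor i j k) t * Tensor.slice Φ V t)
      = msq ((Tensor.slice Φ V t)ᴴ * Tensor.slice Φ (Tensor.colBasis j k) t) := by
  have hE : ∀ (x : Fin n1) (s : Fin r),
      (Tensor.slice Φ (Tensor.unitTensor i j k) t * Tensor.slice Φ V t) x s
        = if x = i then Φ t k * Tensor.slice Φ V t j s else 0 := by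
    intro x s
    rw [Matrix.mul_apply]
    simp only [slice_unitTensor_apply]
    by_cases hx : x = i
    · subst hx
      simp [Finset.sum_ite_eq']
    · simp [hx]
  have hD : ∀ (s : Fin r) (y : Fin 1),
      ((Tensor.slice Φ V t)ᴴ * Tensor.slice Φ (Tensor.colBasis j k) t) s y
        = (starRingEnd ℂ) (Tensor.slice Φ V t j s) * Φ t k := by
    intro s y
    rw [Matrix.mul_apply]
    simp only [Matrix.conjTranspose_apply, Complex.star_def, slice_colBasis_apply]
    simp
  unfold msq
  simp_rw [hE, hD]
  have hswap : (∑ x : Fin n1, ∑ s : Fin r,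
      Complex.normSq (if x = i then Φ t k * Tensor.slice Φ V t j s else 0))
      = ∑ s : Fin r, ∑ x : Fin n1,
      Complex.normSq (if x = i then Φ t k * Tensor.slice Φ V t j s else 0) :=
    Finset.sum_comm
  rw [hswap]
  refine Finset.sum_congr rfl fun s _ => ?_
  simp [apply_ite Complex.normSq, Finset.sum_ite_eq', Complex.normSq_mul, mul_comm]

end EntryLemmas


/-- Pure real arithmetic for the final bound. -/
lemma quad_bound (m p q s cc B : ℝ) (hm0 : 0 ≤ m) (hm : m ≤ p * q) (hq0 : 0 ≤ q)
    (hq1 : q ≤ 1) (hp0 : 0 ≤ p) (hs0 : 0 ≤ s) (hcc0 : 0 ≤ cc) (hcB : cc ≤ B)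
    (hB0 : 0 ≤ B) (hspB : s * p ≤ B) :
    s^2 * m * p - 2 * s * cc * m + cc^2 * q ≤ B^2 := by
  rcases le_or_gt (2 * cc) (s * p) with hc2 | hc2
  · have hcoef : (0:ℝ) ≤ s^2 * p - 2 * s * cc := by nlinarith
    have e1 : m * (s^2 * p - 2 * s * cc) ≤ (p * q) * (s^2 * p - 2 * s * cc) :=
      mul_le_mul_of_nonneg_right hm hcoef
    have e2 : (p * q) * (s^2 * p - 2 * s * cc) + cc^2 * q = q * (s * p - cc)^2 := by ring
    have e3 : q * (s * p - cc)^2 ≤ (s * p - cc)^2 := by nlinarith [sq_nonneg (s * p - cc)]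
    have e4 : (s * p - cc)^2 ≤ B^2 := by nlinarith
    nlinarith
  · have f1 : m * (s^2 * p - 2 * s * cc) ≤ 0 := by
      apply mul_nonpos_of_nonneg_of_nonpos hm0
      nlinarith
    nlinarith

/-- The projection is a contraction in Frobenius norm. -/
lemma frob_projT_le {n1 n2 n3 r : ℕ} (Φ : Matrix (Fin n3) (Fin n3) ℂ)
    (hΦ : Φ ∈ Matrix.unitaryGroup (Fin n3) ℂ)
    (U : Tensor n1 r n3) (V : Tensor n2 r n3)
    (hU : ∀ t, (Tensor.slice Φ U t)ᴴ * Tensor.slice Φ U t = 1)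
    (hV : ∀ t, (Tensor.slice Φ V t)ᴴ * Tensor.slice Φ V t = 1)
    (X : Tensor n1 n2 n3) :
    Tensor.frob (Tensor.projT Φ U V X) ≤ Tensor.frob X := by
  set Y : Tensor n1 n2 n3 := Tensor.projT Φ U V X with hYdef
  have h0 : Tensor.frob Y ^ 2 = (Tensor.tinner Y X).re := by
    rw [frob_sq_re]
    congr 1
    rw [hYdef]
    exact tinner_projT_reproduce Φ hΦ U V hU hV X X
  clear_value Y
  have h1 := Complex.re_le_norm (Tensor.tinner Y X)
  have h2 := abs_tinner_le Y X
  nlinarith [frob_nonneg Y, frob_nonneg X, sq_nonneg (Tensor.frob Y - Tensor.frob X)]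

/-- Expansion of the squared Frobenius norm of the relevant combination. -/
lemma tinner_combo_eq {n1 n2 n3 : ℕ} (P Y : Tensor n1 n2 n3) (α : ℂ) (s cc : ℝ)
    (hPY : Tensor.tinner P Y = α) :
    Tensor.tinner ((((s:ℝ) : ℂ) * α) • P - (((cc:ℝ) : ℂ)) • Y)
        ((((s:ℝ) : ℂ) * α) • P - (((cc:ℝ) : ℂ)) • Y)
      = (((s^2 * Complex.normSq α * (Tensor.frob P ^ 2)
          - 2 * s * cc * Complex.normSq α + cc^2 * (Tensor.frob Y ^ 2) : ℝ)) : ℂ) := by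
  have hYP : Tensor.tinner Y P = (starRingEnd ℂ) α := by
    rw [← tinner_conj, hPY]
  have hαm : (starRingEnd ℂ) α * α = ((Complex.normSq α : ℝ) : ℂ) := by
    rw [mul_comm, Complex.mul_conj]
  simp only [tinner_sub_left, tinner_sub_right, tinner_smul_left, tinner_smul_right]
  simp only [hPY, hYP, tinner_self_eq, _root_.map_mul, Complex.conj_ofReal]
  push_cast
  linear_combination ((s:ℂ)^2 * (Tensor.frob P : ℂ)^2 - 2 * (s:ℂ) * (cc:ℂ)) * hαm

/-- The per-element bound for the operator norm. -/
lemma main_bound {n1 n2 n3 r : ℕ} (Φ : Matrix (Fin n3) (Fin n3) ℂ)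
    (hΦ : Φ ∈ Matrix.unitaryGroup (Fin n3) ℂ)
    (U : Tensor n1 r n3) (V : Tensor n2 r n3)
    (hU : ∀ t, (Tensor.slice Φ U t)ᴴ * Tensor.slice Φ U t = 1)
    (hV : ∀ t, (Tensor.slice Φ V t)ᴴ * Tensor.slice Φ V t = 1)
    (E : Tensor n1 n2 n3) (s cc B : ℝ)
    (hs0 : 0 ≤ s) (hcc0 : 0 ≤ cc) (hcB : cc ≤ B) (hB0 : 0 ≤ B)
    (hspB : s * Tensor.frob (Tensor.projT Φ U V E) ^ 2 ≤ B)
    (X : Tensor n1 n2 n3) (hX : Tensor.frob X ≤ 1) :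
    Tensor.frob (s • (Tensor.tinner (Tensor.projT Φ U V E) X • Tensor.projT Φ U V E)
      - cc • Tensor.projT Φ U V X) ≤ B := by
  set P : Tensor n1 n2 n3 := Tensor.projT Φ U V E with hPdef
  set Y : Tensor n1 n2 n3 := Tensor.projT Φ U V X with hYdef
  set α : ℂ := Tensor.tinner P X with hαdef
  have hPY : Tensor.tinner P Y = α := by
    rw [hαdef, hPdef, hYdef]
    exact tinner_projT_reproduce Φ hΦ U V hU hV E X
  have hqY : Tensor.frob Y ≤ 1 := by
    rw [hYdef]
    exact le_trans (frob_projT_le Φ hΦ U V hU hV X) hX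
  clear_value P Y α
  have hm : Complex.normSq α ≤ Tensor.frob P ^ 2 * Tensor.frob Y ^ 2 := by
    have h1 : ‖α‖ ≤ Tensor.frob P * Tensor.frob Y := by
      rw [← hPY]
      exact abs_tinner_le P Y
    have h2 : Complex.normSq α = ‖α‖ ^ 2 := (Complex.sq_norm α).symm
    have h3 : ‖α‖ ^ 2 ≤ (Tensor.frob P * Tensor.frob Y) ^ 2 := by
      have := norm_nonneg α
      nlinarith
    rw [h2]
    nlinarith [h3]
  have hLX : s • (α • P) - cc • Y
      = ((((s:ℝ)) : ℂ) * α) • P - ((((cc:ℝ)) : ℂ)) • Y := by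
    rw [rsmul_eq, rsmul_eq, smul_smul]
  have hfrobsq : Tensor.frob (s • (α • P) - cc • Y) ^ 2
      = s^2 * Complex.normSq α * (Tensor.frob P ^ 2)
          - 2 * s * cc * Complex.normSq α + cc^2 * (Tensor.frob Y ^ 2) := by
    rw [frob_sq_re, hLX, tinner_combo_eq P Y α s cc hPY, Complex.ofReal_re]
  have hq0 : (0:ℝ) ≤ Tensor.frob Y ^ 2 := sq_nonneg _
  have hq1 : Tensor.frob Y ^ 2 ≤ 1 := by nlinarith [frob_nonneg Y]
  have hm0 : (0:ℝ) ≤ Complex.normSq α := Complex.normSq_nonneg _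
  have hp0 : (0:ℝ) ≤ Tensor.frob P ^ 2 := sq_nonneg _
  have hkey : Tensor.frob (s • (α • P) - cc • Y) ^ 2 ≤ B ^ 2 := by
    rw [hfrobsq]
    exact quad_bound _ _ _ _ _ _ hm0 hm hq0 hq1 hp0 hs0 hcc0 hcB hB0 hspB
  calc Tensor.frob (s • (α • P) - cc • Y)
      = Real.sqrt (Tensor.frob (s • (α • P) - cc • Y) ^ 2) :=
        (Real.sqrt_sq (frob_nonneg _)).symm
    _ ≤ Real.sqrt (B ^ 2) := Real.sqrt_le_sqrt hkey
    _ = B := Real.sqrt_sq hB0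

end Statement13Aux

open Statement13Aux

/-- operator-norm bound on T^{ijk}_δ − (1/(n1 n2 n3)) P_T. -/
theorem statement13 {n1 n2 n3 r : ℕ} (Φ : Matrix (Fin n3) (Fin n3) ℂ)
    (hΦ : Φ ∈ Matrix.unitaryGroup (Fin n3) ℂ)
    (Z : Tensor n1 n2 n3) (U : Tensor n1 r n3) (S : Tensor r r n3) (V : Tensor n2 r n3)
    (hSVD : SkinnySVD Φ Z r U S V)
    (μ : ℝ) (hμ : 1 ≤ μ) (hinc : Incoherent Φ Z U V μ)
    (hrsum : 1 ≤ ∑ t, (slice Φ Z t).rank)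
    (ρ : ℝ) (hρ0 : 0 < ρ) (hρ1 : ρ ≤ 1)
    (i : Fin n1) (j : Fin n2) (k : Fin n3) (δ : ℝ) (hδ : δ = 0 ∨ δ = 1) :
    opNorm (fun X : Tensor n1 n2 n3 =>
        (ρ⁻¹ * δ) • (tinner (projT Φ U V (unitTensor i j k)) X •
          projT Φ U V (unitTensor i j k))
        - ((n1 * n2 * n3 : ℝ))⁻¹ • projT Φ U V X)
      ≤ 2 * μ * (∑ t, ((slice Φ Z t).rank : ℝ)) / ((min n1 n2 : ℝ) * n3 * ρ) := by
  classical
  have hU := hSVD.U_orth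
  have hV := hSVD.V_orth
  -- dimension positivity
  have hn3 : 0 < n3 := by
    rcases Nat.eq_zero_or_pos n3 with h | h
    · exfalso; subst h; simp at hrsum
    · exact h
  have hn1 : 0 < n1 := by
    rcases Nat.eq_zero_or_pos n1 with h | h
    · exfalso
      have hz : ∀ t, (Tensor.slice Φ Z t).rank = 0 := by
        intro t
        have h2 := Matrix.rank_le_height (Tensor.slice Φ Z t)
        omega
      simp [hz] at hrsum
    · exact h
  have hn2 : 0 < n2 := by
    rcases Nat.eq_zero_or_pos n2 with h | h
    · exfalso
      have hz : ∀ t, (Tensor.slice Φ Z t).rank = 0 := by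
        intro t
        have h2 := Matrix.rank_le_width (Tensor.slice Φ Z t)
        omega
      simp [hz] at hrsum
    · exact h
  have hn1R : (1:ℝ) ≤ (n1:ℝ) := by exact_mod_cast hn1
  have hn2R : (1:ℝ) ≤ (n2:ℝ) := by exact_mod_cast hn2
  have hn3R : (1:ℝ) ≤ (n3:ℝ) := by exact_mod_cast hn3
  have hS1 : (1:ℝ) ≤ ∑ t, ((Tensor.slice Φ Z t).rank : ℝ) := by exact_mod_cast hrsum
  set Sr : ℝ := ∑ t, ((Tensor.slice Φ Z t).rank : ℝ) with hSdef
  clear_value Sr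
  have hminR : (1:ℝ) ≤ min (n1:ℝ) (n2:ℝ) := le_min hn1R hn2R
  have hμ0 : (0:ℝ) ≤ μ := by linarith
  have hSr0 : (0:ℝ) ≤ Sr := by linarith
  have hμS : (0:ℝ) ≤ μ * Sr := mul_nonneg hμ0 hSr0
  have hminpos : (0:ℝ) < min (n1:ℝ) (n2:ℝ) := by linarith
  have hn3R0 : (0:ℝ) < (n3:ℝ) := by linarith
  have hmin3 : (0:ℝ) < min (n1:ℝ) (n2:ℝ) * (n3:ℝ) := mul_pos hminpos hn3R0
  set B : ℝ := 2 * μ * Sr / (min (n1:ℝ) (n2:ℝ) * (n3:ℝ) * ρ) with hBdef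
  clear_value B
  have hD : 0 < min (n1:ℝ) (n2:ℝ) * (n3:ℝ) * ρ := mul_pos hmin3 hρ0
  have hB0 : 0 ≤ B := by
    rw [hBdef]
    apply div_nonneg (by nlinarith) hD.le
  set E : Tensor n1 n2 n3 := Tensor.unitTensor i j k with hEdef
  set P : Tensor n1 n2 n3 := Tensor.projT Φ U V E with hPdef
  clear_value E P
  -- bound on p = frob P ^ 2
  have hpE : Tensor.frob P ^ 2 = (Tensor.tinner P E).re := by
    rw [frob_sq_re]
    congr 1
    rw [hPdef]
    exact tinner_projT_reproduce Φ hΦ U V hU hV E E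
  have hp : Tensor.frob P ^ 2 ≤ 2 * μ * Sr / (min (n1:ℝ) (n2:ℝ) * (n3:ℝ)) := by
    have h1 : (Tensor.tinner P E).re
        ≤ ∑ t, (msq ((Tensor.slice Φ U t)ᴴ * Tensor.slice Φ E t)
            + msq (Tensor.slice Φ E t * Tensor.slice Φ V t)) := by
      rw [hPdef, tinner_slices Φ hΦ, Complex.re_sum]
      refine Finset.sum_le_sum fun t _ => ?_
      rw [slice_projT Φ hΦ]
      exact re_minner_Qmap_le _
    have h2 : ∑ t, msq ((Tensor.slice Φ U t)ᴴ * Tensor.slice Φ E t)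
        = Tensor.frob (Tensor.tprod Φ (Tensor.tconj Φ U) (Tensor.colBasis i k)) ^ 2 := by
      rw [frob_sq_slices Φ hΦ]
      refine Finset.sum_congr rfl fun t _ => ?_
      rw [slice_tprod Φ hΦ, slice_tconj Φ hΦ, hEdef]
      exact msq_UE Φ i j k U t
    have h3 : ∑ t, msq (Tensor.slice Φ E t * Tensor.slice Φ V t)
        = Tensor.frob (Tensor.tprod Φ (Tensor.tconj Φ V) (Tensor.colBasis j k)) ^ 2 := by
      rw [frob_sq_slices Φ hΦ]
      refine Finset.sum_congr rfl fun t _ => ?_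
      rw [slice_tprod Φ hΦ, slice_tconj Φ hΦ, hEdef]
      exact msq_EV Φ i j k V t
    have h4 := hinc.1 i k
    have h5 := hinc.2 j k
    rw [← hSdef] at h4 h5
    have hd1 : μ * Sr / ((n1:ℝ) * (n3:ℝ)) ≤ μ * Sr / (min (n1:ℝ) (n2:ℝ) * (n3:ℝ)) :=
      div_le_div_of_nonneg_left hμS hmin3
        (mul_le_mul_of_nonneg_right (min_le_left _ _) hn3R0.le)
    have hd2 : μ * Sr / ((n2:ℝ) * (n3:ℝ)) ≤ μ * Sr / (min (n1:ℝ) (n2:ℝ) * (n3:ℝ)) :=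
      div_le_div_of_nonneg_left hμS hmin3
        (mul_le_mul_of_nonneg_right (min_le_right _ _) hn3R0.le)
    have hsum : Finset.univ.sum (fun t => msq ((Tensor.slice Φ U t)ᴴ * Tensor.slice Φ E t)
            + msq (Tensor.slice Φ E t * Tensor.slice Φ V t))
        = (∑ t, msq ((Tensor.slice Φ U t)ᴴ * Tensor.slice Φ E t))
          + ∑ t, msq (Tensor.slice Φ E t * Tensor.slice Φ V t) :=
      Finset.sum_add_distrib
    rw [hpE]
    rw [hsum, h2, h3] at h1
    have hfin : μ * Sr / (min (n1:ℝ) (n2:ℝ) * (n3:ℝ)) + μ * Sr / (min (n1:ℝ) (n2:ℝ) * (n3:ℝ))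
        = 2 * μ * Sr / (min (n1:ℝ) (n2:ℝ) * (n3:ℝ)) := by ring
    linarith
  have hBeq : B = ρ⁻¹ * (2 * μ * Sr / (min (n1:ℝ) (n2:ℝ) * (n3:ℝ))) := by
    rw [hBdef]
    field_simp
  have hspB0 : ρ⁻¹ * Tensor.frob P ^ 2 ≤ B := by
    rw [hBeq]
    exact mul_le_mul_of_nonneg_left hp (by positivity)
  have hcc0 : (0:ℝ) ≤ ((n1:ℝ) * (n2:ℝ) * (n3:ℝ))⁻¹ := by positivity
  have hcB : ((n1:ℝ) * (n2:ℝ) * (n3:ℝ))⁻¹ ≤ B := by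
    have h1 : min (n1:ℝ) (n2:ℝ) * (n3:ℝ) * ρ ≤ (n1:ℝ) * (n2:ℝ) * (n3:ℝ) := by
      have hm1 : min (n1:ℝ) (n2:ℝ) ≤ (n1:ℝ) := min_le_left _ _
      have e1 : min (n1:ℝ) (n2:ℝ) * (n3:ℝ) * ρ ≤ min (n1:ℝ) (n2:ℝ) * (n3:ℝ) * 1 :=
        mul_le_mul_of_nonneg_left hρ1 hmin3.le
      have e2 : min (n1:ℝ) (n2:ℝ) * (n3:ℝ) ≤ (n1:ℝ) * (n3:ℝ) :=
        mul_le_mul_of_nonneg_right hm1 hn3R0.le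
      have e3 : (n1:ℝ) * (n3:ℝ) ≤ (n1:ℝ) * (n2:ℝ) * (n3:ℝ) := by
        nlinarith [mul_nonneg (mul_nonneg (by linarith : (0:ℝ) ≤ (n1:ℝ)) hn3R0.le)
          (by linarith : (0:ℝ) ≤ (n2:ℝ) - 1)]
      rw [mul_one] at e1
      linarith
    calc ((n1:ℝ) * (n2:ℝ) * (n3:ℝ))⁻¹ = 1 / ((n1:ℝ) * (n2:ℝ) * (n3:ℝ)) := (one_div _).symm
      _ ≤ 1 / (min (n1:ℝ) (n2:ℝ) * (n3:ℝ) * ρ) := one_div_le_one_div_of_le hD h1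
      _ ≤ 2 * μ * Sr / (min (n1:ℝ) (n2:ℝ) * (n3:ℝ) * ρ) := by
          gcongr
          nlinarith
      _ = B := hBdef.symm
  -- the main per-element bound
  have hs0 : 0 ≤ ρ⁻¹ * δ := by
    rcases hδ with h | h <;> rw [h] <;> [simp; positivity]
  have hspB : (ρ⁻¹ * δ) * Tensor.frob P ^ 2 ≤ B := by
    rcases hδ with h | h
    · rw [h, mul_zero, zero_mul]
      exact hB0
    · rw [h, mul_one]
      exact hspB0
  have main : ∀ X : Tensor n1 n2 n3, Tensor.frob X ≤ 1 →
      Tensor.frob ((ρ⁻¹ * δ) • (Tensor.tinner P X • P)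
        - ((n1 * n2 * n3 : ℝ))⁻¹ • Tensor.projT Φ U V X) ≤ B := by
    intro X hX
    rw [hPdef]
    exact main_bound Φ hΦ U V hU hV E (ρ⁻¹ * δ) (((n1:ℝ) * (n2:ℝ) * (n3:ℝ))⁻¹) B
      hs0 hcc0 hcB hB0 (by rw [← hPdef]; exact hspB) X hX
  unfold Tensor.opNorm
  apply Real.sSup_le
  · rintro x ⟨X, hX, rfl⟩
    exact main X hX
  · exact hB0
end
end

section
/- Let Z ∈ ℂ^{n1×n2×n3} and let w = (α_1,…,α_{n3}) be a weight vector of nonnegative reals with |Φ_{tk}| ≤ α_k for all t,k. Then the tensor spectral norm satisfies ‖Σ_{i,j,k} |Z_{ijk}|² e_jk ⋄ e_jkᴴ‖ ≤ ‖Z‖_{∞,w}², where the sum runs over all (i,j,k) ∈ [n1]×[n2]×[n3] and e_jk ∈ ℂ^{n2×1×n3} is the column-basis tensor. -/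
open scoped BigOperators ComplexConjugate
open MeasureTheory Matrix

noncomputable section

open Tensor


section Aux

variable {m1 m2 m3 m4 : ℕ}

lemma aux_slice_unslice (Φ : Matrix (Fin m3) (Fin m3) ℂ)
    (hΦ : Φ ∈ Matrix.unitaryGroup (Fin m3) ℂ)
    (M : Fin m3 → Matrix (Fin m1) (Fin m2) ℂ) (t : Fin m3) :
    slice Φ (unslice Φ M) t = M t := by
  have h1 : Φ * Φᴴ = 1 := by
    have := Matrix.mem_unitaryGroup_iff.mp hΦ
    rwa [Matrix.star_eq_conjTranspose] at this
  ext i j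
  simp only [Tensor.slice, Tensor.unslice, Matrix.of_apply]
  calc ∑ c, Φ t c * ∑ s, (starRingEnd ℂ) (Φ s c) * M s i j
      = ∑ s, (∑ c, Φ t c * (starRingEnd ℂ) (Φ s c)) * M s i j := by
        simp_rw [Finset.mul_sum, Finset.sum_mul]
        rw [Finset.sum_comm]
        simp_rw [mul_assoc]
    _ = ∑ s, (Φ * Φᴴ) t s * M s i j := by
        simp [Matrix.mul_apply, Matrix.conjTranspose_apply]
    _ = M t i j := by
        rw [h1]
        simp [Matrix.one_apply]

lemma aux_slice_tprod (Φ : Matrix (Fin m3) (Fin m3) ℂ)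
    (hΦ : Φ ∈ Matrix.unitaryGroup (Fin m3) ℂ)
    (A : Tensor m1 m2 m3) (B : Tensor m2 m4 m3) (t : Fin m3) :
    slice Φ (tprod Φ A B) t = slice Φ A t * slice Φ B t :=
  aux_slice_unslice Φ hΦ _ t

lemma aux_slice_tconj (Φ : Matrix (Fin m3) (Fin m3) ℂ)
    (hΦ : Φ ∈ Matrix.unitaryGroup (Fin m3) ℂ)
    (A : Tensor m1 m2 m3) (t : Fin m3) :
    slice Φ (tconj Φ A) t = (slice Φ A t)ᴴ :=
  aux_slice_unslice Φ hΦ _ t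

lemma aux_slice_sum {ι : Type*} (Φ : Matrix (Fin m3) (Fin m3) ℂ)
    (s : Finset ι) (f : ι → Tensor m1 m2 m3) (t : Fin m3) :
    slice Φ (∑ x ∈ s, f x) t = ∑ x ∈ s, slice Φ (f x) t := by
  ext i j
  simp only [Tensor.slice, Matrix.of_apply, Matrix.sum_apply, Finset.sum_apply, Finset.mul_sum]
  rw [Finset.sum_comm]

lemma aux_slice_smul (Φ : Matrix (Fin m3) (Fin m3) ℂ)
    (r : ℝ) (A : Tensor m1 m2 m3) (t : Fin m3) :
    slice Φ (r • A) t = r • slice Φ A t := by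
  ext i j
  simp only [Tensor.slice, Matrix.of_apply, Matrix.smul_apply, Pi.smul_apply,
    mul_smul_comm, Finset.smul_sum]

lemma aux_slice_colBasis (Φ : Matrix (Fin m3) (Fin m3) ℂ)
    (j : Fin m2) (k t : Fin m3) :
    slice Φ (colBasis j k) t
      = Matrix.of fun a (_ : Fin 1) => if a = j then Φ t k else 0 := by
  ext a b
  simp only [Tensor.slice, Tensor.colBasis, Matrix.of_apply, mul_ite, mul_one, mul_zero]
  by_cases h : a = j <;> simp [h]

end Aux

/-- spectral norm bound for Σ |Z_ijk|² e_jk ⋄ e_jkᴴ. -/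
theorem statement15 {n1 n2 n3 : ℕ} (Φ : Matrix (Fin n3) (Fin n3) ℂ)
    (hΦ : Φ ∈ Matrix.unitaryGroup (Fin n3) ℂ)
    (Z : Tensor n1 n2 n3) (w : Fin n3 → ℝ)
    (hw0 : ∀ k, 0 ≤ w k) (hwΦ : ∀ t k, ‖Φ t k‖ ≤ w k) :
    specNorm Φ (∑ i : Fin n1, ∑ j : Fin n2, ∑ k : Fin n3,
        Complex.normSq (Z i j k) • tprod Φ (colBasis j k) (tconj Φ (colBasis j k)))
      ≤ (inftyWNorm w Z) ^ 2 := by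
  set c := (inftyWNorm w Z) ^ 2 with hc
  have hc0 : 0 ≤ c := sq_nonneg _
  have key : ∀ t : Fin n3,
      specNormM (slice Φ (∑ i : Fin n1, ∑ j : Fin n2, ∑ k : Fin n3,
        Complex.normSq (Z i j k) • tprod Φ (colBasis j k) (tconj Φ (colBasis j k))) t)
        ≤ c := by
    intro t
    set d : Fin n2 → ℝ :=
      fun a => ∑ i, ∑ k, Complex.normSq (Z i a k) * Complex.normSq (Φ t k) with hd
    have hd0 : ∀ a, 0 ≤ d a := fun a =>
      Finset.sum_nonneg fun i _ => Finset.sum_nonneg fun k _ =>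
        mul_nonneg (Complex.normSq_nonneg _) (Complex.normSq_nonneg _)
    have hdc : ∀ a, d a ≤ c := by
      intro a
      set S : ℝ := ∑ i, ∑ k, (w k) ^ 2 * Complex.normSq (Z i a k) with hS
      have hS0 : 0 ≤ S := Finset.sum_nonneg fun i _ => Finset.sum_nonneg fun k _ =>
        mul_nonneg (sq_nonneg _) (Complex.normSq_nonneg _)
      have h1 : d a ≤ S := by
        apply Finset.sum_le_sum; intro i _
        apply Finset.sum_le_sum; intro k _
        rw [mul_comm]
        apply mul_le_mul_of_nonneg_right _ (Complex.normSq_nonneg _)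
        calc Complex.normSq (Φ t k) = (‖Φ t k‖) ^ 2 := (Complex.sq_norm _).symm
          _ ≤ (w k) ^ 2 := pow_le_pow_left₀ (norm_nonneg _) (hwΦ t k) 2
      have h2 : Real.sqrt S ≤ inftyWNorm w Z := by
        refine le_trans ?_ (le_max_right _ _)
        exact le_ciSup (f := fun j : Fin n2 => Real.sqrt
          (∑ a, ∑ k, (w k) ^ 2 * Complex.normSq (Z a j k)))
          (Set.Finite.bddAbove (Set.finite_range _)) a
      calc d a ≤ S := h1
        _ = (Real.sqrt S) ^ 2 := (Real.sq_sqrt hS0).symm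
        _ ≤ c := pow_le_pow_left₀ (Real.sqrt_nonneg _) h2 2
    have hsl : slice Φ (∑ i : Fin n1, ∑ j : Fin n2, ∑ k : Fin n3,
        Complex.normSq (Z i j k) • tprod Φ (colBasis j k) (tconj Φ (colBasis j k))) t
        = Matrix.diagonal fun a : Fin n2 => ((d a : ℝ) : ℂ) := by
      rw [aux_slice_sum]
      simp only [aux_slice_sum, aux_slice_smul, aux_slice_tprod Φ hΦ,
        aux_slice_tconj Φ hΦ, aux_slice_colBasis]
      ext a b
      simp only [Matrix.sum_apply, Matrix.smul_apply, Matrix.mul_apply,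
        Matrix.conjTranspose_apply, Matrix.of_apply, Fin.sum_univ_one]
      by_cases hab : a = b
      · subst hab
        rw [Matrix.diagonal_apply_eq]
        have : ∀ i : Fin n1, ∀ j : Fin n2, ∀ k : Fin n3,
            Complex.normSq (Z i j k) •
              ((if a = j then Φ t k else 0) * star (if a = j then Φ t k else 0))
            = if j = a then ((Complex.normSq (Z i j k) * Complex.normSq (Φ t k) : ℝ) : ℂ)
              else 0 := by
          intro i j k
          by_cases h : a = j
          · subst h
            simp [Complex.star_def, Complex.mul_conj, Complex.real_smul]
          · simp only [if_neg h, zero_mul, mul_zero, star_zero, smul_zero]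
            rw [if_neg (fun hja : j = a => h hja.symm)]
        simp only [this, Finset.sum_ite_irrel, Finset.sum_const_zero,
          Finset.sum_ite_eq', Finset.mem_univ, if_true]
        rw [hd]
        push_cast
        ring
      · rw [Matrix.diagonal_apply_ne _ hab]
        apply Finset.sum_eq_zero; intro i _
        apply Finset.sum_eq_zero; intro j _
        apply Finset.sum_eq_zero; intro k _
        by_cases h : a = j
        · have hb : ¬ b = j := fun hb => hab (h.trans hb.symm)
          simp [h, hb]
        · simp [h]
    rw [hsl]
    unfold specNormM
    apply ContinuousLinearMap.opNorm_le_bound _ hc0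
    intro x
    rw [LinearMap.coe_toContinuousLinearMap']
    have hcomp : ∀ a : Fin n2,
        ‖(Matrix.toEuclideanLin (Matrix.diagonal fun a : Fin n2 => ((d a : ℝ) : ℂ)) x) a‖
          = d a * ‖x a‖ := by
      intro a
      have h : (Matrix.toEuclideanLin (Matrix.diagonal fun a : Fin n2 => ((d a : ℝ) : ℂ)) x) a
          = ((d a : ℝ) : ℂ) * x a := by
        simp [Matrix.toEuclideanLin_apply, Matrix.mulVec_diagonal]
      rw [h, norm_mul, Complex.norm_real, Real.norm_of_nonneg (hd0 a)]
    calc ‖Matrix.toEuclideanLin (Matrix.diagonal fun a : Fin n2 => ((d a : ℝ) : ℂ)) x‖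
        = Real.sqrt (∑ a, ‖(Matrix.toEuclideanLin
            (Matrix.diagonal fun a : Fin n2 => ((d a : ℝ) : ℂ)) x) a‖ ^ 2) :=
          EuclideanSpace.norm_eq _
      _ ≤ Real.sqrt (∑ a, (c * ‖x a‖) ^ 2) := by
          apply Real.sqrt_le_sqrt
          apply Finset.sum_le_sum
          intro a _
          rw [hcomp a]
          apply pow_le_pow_left₀ (mul_nonneg (hd0 a) (norm_nonneg _))
          exact mul_le_mul_of_nonneg_right (hdc a) (norm_nonneg _)
      _ = c * Real.sqrt (∑ a, ‖x a‖ ^ 2) := by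
          simp_rw [mul_pow, ← Finset.mul_sum]
          rw [Real.sqrt_mul (sq_nonneg _), Real.sqrt_sq hc0]
      _ = c * ‖x‖ := by rw [EuclideanSpace.norm_eq]
  unfold specNorm
  rcases isEmpty_or_nonempty (Fin n3) with h3 | h3
  · rw [Real.iSup_of_isEmpty]
    exact hc0
  · exact ciSup_le key
end
end
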